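/- arXiv:2303.08549 — 3 statements merged into one kernel-verified Lean document; each statement's English description precedes it below -/
import Mathlib

section
/- Under the standing assumptions, let x ∈ dom ∂φ and x* ∈ ∂φ(x). The pair (x, x*) is a fixed point of the nonlinear Bregman–Kaczmarz iteration (i.e., for every index i the NBK update starting from (x,x*) with index i returns (x,x*)) if and only if for every i ∈ {1,…,n} it holds that f_i(x) = 0 or ∇f_i(x) = 0. -/
open Set Filter Topology MeasureTheory ProbabilityTheory

noncomputable section

abbrev Euc (d : ℕ) := EuclideanSpace ℝ (Fin d)

/-- Real inner product on `ℝ^d`. -/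
def rinn {d : ℕ} (x y : Euc d) : ℝ := inner ℝ x y

/-- Effective domain of an extended-real-valued function. -/
def edom {d : ℕ} (φ : Euc d → EReal) : Set (Euc d) := {x | φ x ≠ ⊤}

/-- Convex subdifferential. -/
def subdiff {d : ℕ} (φ : Euc d → EReal) (x : Euc d) : Set (Euc d) :=
  {u | φ x ≠ ⊤ ∧ ∀ y : Euc d, φ x + ((rinn u (y - x) : ℝ) : EReal) ≤ φ y}

/-- Domain of the subdifferential. -/
def ddom {d : ℕ} (φ : Euc d → EReal) : Set (Euc d) := {x | (subdiff φ x).Nonempty}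

/-- Bregman distance `D_φ^{u}(x,y) = φ(y) - φ(x) - ⟨u, y - x⟩`. -/
def breg {d : ℕ} (φ : Euc d → EReal) (u x y : Euc d) : EReal :=
  φ y - φ x - ((rinn u (y - x) : ℝ) : EReal)

/-- Fenchel conjugate (extended-real-valued). -/
def econj {d : ℕ} (φ : Euc d → EReal) (u : Euc d) : EReal :=
  ⨆ x : Euc d, ((rinn u x : ℝ) : EReal) - φ x

/-- Real-valued Fenchel conjugate (under the standing assumptions `econj` is finite). -/
def rconj {d : ℕ} (φ : Euc d → EReal) (u : Euc d) : ℝ := (econj φ u).toReal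

/-- Gradient `∇φ*` of the conjugate. -/
def gradconj {d : ℕ} (φ : Euc d → EReal) (u : Euc d) : Euc d := gradient (rconj φ) u

def ConvexE {d : ℕ} (φ : Euc d → EReal) : Prop :=
  ∀ x y : Euc d, ∀ t : ℝ, 0 < t → t < 1 →
    φ (t • x + (1 - t) • y) ≤ (t : EReal) * φ x + ((1 - t : ℝ) : EReal) * φ y

def StrictConvexOnE {d : ℕ} (φ : Euc d → EReal) (s : Set (Euc d)) : Prop :=
  ∀ x ∈ s, ∀ y ∈ s, x ≠ y → ∀ t : ℝ, 0 < t → t < 1 →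
    φ (t • x + (1 - t) • y) < (t : EReal) * φ x + ((1 - t : ℝ) : EReal) * φ y

def ProperE {d : ℕ} (φ : Euc d → EReal) : Prop :=
  (∃ x, φ x ≠ ⊤) ∧ ∀ x, φ x ≠ ⊥

/-- `φ(x)/‖x‖ → ∞` as `‖x‖ → ∞`. -/
def Supercoercive {d : ℕ} (φ : Euc d → EReal) : Prop :=
  ∀ M : ℝ, ∃ R : ℝ, ∀ x : Euc d, R ≤ ‖x‖ → ((M * ‖x‖ : ℝ) : EReal) ≤ φ x

/-- Essential strict convexity: strict convexity on the relative interior of the domain. -/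
def EssStrictConvexE {d : ℕ} (φ : Euc d → EReal) : Prop :=
  StrictConvexOnE φ (intrinsicInterior ℝ (edom φ))

/-- Standing assumptions on the distance generating function `φ` and constraint set `C`. -/
structure PhiAssump {d : ℕ} (φ : Euc d → EReal) (C : Set (Euc d)) : Prop where
  Cne : C.Nonempty
  Cconv : Convex ℝ C
  Ccl : IsClosed C
  proper : ProperE φ
  conv : ConvexE φ
  lsc : LowerSemicontinuous φ
  coercive : Supercoercive φ
  essstrict : EssStrictConvexE φ
  domC : closure (ddom φ) = C
  ri_eq : ddom φ = intrinsicInterior ℝ (edom φ)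

/-- Standing assumption (iv): Bregman distances tend to zero along convergent sequences. -/
def BregCont {d : ℕ} (φ : Euc d → EReal) : Prop :=
  ∀ x ∈ edom φ, ∀ xk : ℕ → Euc d, ∀ uk : ℕ → Euc d,
    (∀ k, uk k ∈ subdiff φ (xk k)) → Tendsto xk atTop (𝓝 x) →
    Tendsto (fun k => breg φ (uk k) (xk k) x) atTop (𝓝 (0 : EReal))

/-- `f` is continuously differentiable on `Dset ⊇ C`, with gradients `f'`. -/
structure FAssump {d n : ℕ} (f : Fin n → Euc d → ℝ) (f' : Fin n → Euc d → Euc d)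
    (Dset C : Set (Euc d)) : Prop where
  CsubD : C ⊆ Dset
  grad : ∀ i, ∀ x ∈ Dset, HasGradientAt (f i) (f' i x) x
  cont : ∀ i, ContinuousOn (f' i) Dset

/-- Solution set `S = C ∩ f⁻¹(0)`. -/
def solSet {d n : ℕ} (f : Fin n → Euc d → ℝ) (C : Set (Euc d)) : Set (Euc d) :=
  {x ∈ C | ∀ i, f i x = 0}

/-- `N` is a norm on `ℝ^d`. -/
def IsANorm {d : ℕ} (N : Euc d → ℝ) : Prop :=
  (∀ x, N x = 0 ↔ x = 0) ∧ (∀ (c : ℝ) (x : Euc d), N (c • x) = |c| * N x) ∧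
    ∀ x y : Euc d, N (x + y) ≤ N x + N y

/-- Dual norm of `N`. -/
def dualN {d : ℕ} (N : Euc d → ℝ) (u : Euc d) : ℝ :=
  sSup {r : ℝ | ∃ y : Euc d, N y ≤ 1 ∧ r = (rinn u y)}

/-- `φ` is `σ`-strongly convex w.r.t. the norm `N`. -/
def StronglyConvexWrt {d : ℕ} (φ : Euc d → EReal) (σ : ℝ) (N : Euc d → ℝ) : Prop :=
  ∀ x ∈ ddom φ, ∀ y ∈ ddom φ, ∀ u ∈ subdiff φ x,
    ((σ / 2 * (N (x - y)) ^ 2 : ℝ) : EReal) ≤ breg φ u x y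

/-- `φ` is `M`-smooth w.r.t. the norm `N`: finite everywhere (subdifferentiable everywhere)
with the quadratic upper bound. -/
def SmoothWrt {d : ℕ} (φ : Euc d → EReal) (M : ℝ) (N : Euc d → ℝ) : Prop :=
  (∀ x : Euc d, (subdiff φ x).Nonempty) ∧
    ∀ x y : Euc d, ∀ u ∈ subdiff φ x,
      breg φ u x y ≤ ((M / 2 * (N (x - y)) ^ 2 : ℝ) : EReal)

/-- `g` (with gradient `g'`) is star-convex. -/
def StarConvexWith {d : ℕ} (g : Euc d → ℝ) (g' : Euc d → Euc d) : Prop :=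
  (∃ z : Euc d, ∀ y, g z ≤ g y) ∧
    ∀ x z : Euc d, (∀ y, g z ≤ g y) → g x + rinn (g' x) (z - x) ≤ g z

/-- `g` (with gradient `g'`) is strictly star-convex. -/
def StrictStarConvexWith {d : ℕ} (g : Euc d → ℝ) (g' : Euc d → Euc d) : Prop :=
  (∃ z : Euc d, ∀ y, g z ≤ g y) ∧
    ∀ x z : Euc d, (∀ y, g z ≤ g y) → x ≠ z → g x + rinn (g' x) (z - x) < g z

/-- `g` is `μ`-strongly star-convex relative to `φ`. -/
def StronglyStarConvexRel {d : ℕ} (g : Euc d → ℝ) (g' : Euc d → Euc d) (μ : ℝ)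
    (φ : Euc d → EReal) : Prop :=
  (∃ z : Euc d, ∀ y, g z ≤ g y) ∧
    ∀ x : Euc d, ∀ u ∈ subdiff φ x, ∀ z : Euc d, (∀ y, g z ≤ g y) →
      ((g x + rinn (g' x) (z - x) : ℝ) : EReal) + (μ : EReal) * breg φ u x z ≤ (g z : EReal)

def IsAffineF {d : ℕ} (g : Euc d → ℝ) : Prop :=
  ∃ (a : Euc d) (b : ℝ), ∀ x, g x = (rinn a x) + b

/-- Assumption 2: each component is either nonnegative star-convex with a zero in `dom ∂φ`,
nonnegative strictly star-convex, or affine. -/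
def Assump2 {d n : ℕ} (φ : Euc d → EReal) (f : Fin n → Euc d → ℝ)
    (f' : Fin n → Euc d → Euc d) : Prop :=
  ∀ i : Fin n,
    ((∀ x, 0 ≤ f i x) ∧ StarConvexWith (f i) (f' i) ∧ ∃ z ∈ ddom φ, f i z = 0) ∨
    ((∀ x, 0 ≤ f i x) ∧ StrictStarConvexWith (f i) (f' i)) ∨
    IsAffineF (f i)

/-- `g` is `L`-smooth w.r.t. the norm `N` (quadratic upper bound). -/
def LSmoothWrt {d : ℕ} (g : Euc d → ℝ) (g' : Euc d → Euc d) (L : ℝ) (N : Euc d → ℝ) : Prop :=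
  ∀ x y : Euc d, g y ≤ g x + rinn (g' x) (y - x) + L / 2 * (N (x - y)) ^ 2

/-- Hyperplane given by the linearization of `f i` at `x`. -/
def linHyp {d n : ℕ} (f : Fin n → Euc d → ℝ) (f' : Fin n → Euc d → Euc d)
    (i : Fin n) (x : Euc d) : Set (Euc d) :=
  {y | f i x + rinn (f' i x) (y - x) = 0}

/-- Objective of the one-dimensional dual problem defining the exact NBK step size. -/
def lineObj {d n : ℕ} (φ : Euc d → EReal) (f : Fin n → Euc d → ℝ)
    (f' : Fin n → Euc d → Euc d) (i : Fin n) (x u : Euc d) (t : ℝ) : ℝ :=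
  rconj φ (u - t • f' i x) + t * (rinn (f' i x) x - f i x)

/-- Local tangential cone condition with constant `η` on `U`. -/
def TCCOn {d : ℕ} (g : Euc d → ℝ) (g' : Euc d → Euc d) (η : ℝ) (U : Set (Euc d)) : Prop :=
  ∀ x ∈ U, ∀ y ∈ U, |g x + rinn (g' x) (y - x) - g y| ≤ η * |g x - g y|

/-- The set `B_{r,φ}(z)`. -/
def BregBall {d : ℕ} (φ : Euc d → EReal) (C : Set (Euc d)) (r : ℝ) (z : Euc d) :
    Set (Euc d) :=
  {x ∈ C | ∀ u ∈ subdiff φ x, breg φ u x z ≤ (r : EReal)}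

end

/-- One update of the Nonlinear Bregman–Kaczmarz (NBK) method with component `i`,
mapping `(x, u)` to `(x', u')`. -/
def NBKStep {d n : ℕ} (φ : Euc d → EReal) (σ : ℝ) (N : Euc d → ℝ)
    (f : Fin n → Euc d → ℝ) (f' : Fin n → Euc d → Euc d)
    (i : Fin n) (x u x' u' : Euc d) : Prop :=
  ((f i x = 0 ∨ f' i x = 0) → x' = x ∧ u' = u) ∧
  (¬(f i x = 0 ∨ f' i x = 0) →
    ∃ t : ℝ,
      ((linHyp f f' i x ∩ ddom φ).Nonempty →
        ∀ s : ℝ, lineObj φ f f' i x u t ≤ lineObj φ f f' i x u s) ∧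
      (¬(linHyp f f' i x ∩ ddom φ).Nonempty →
        t = σ * f i x / (dualN N (f' i x)) ^ 2) ∧
      u' = u - t • f' i x ∧ x' = gradconj φ u')

noncomputable section NBKHelpers

variable {d : ℕ} {φ : Euc d → EReal}

lemma nbk_rinn_sub_right (u x y : Euc d) : rinn u (x - y) = rinn u x - rinn u y :=
  inner_sub_right u x y

lemma nbk_rinn_add_right (u x y : Euc d) : rinn u (x + y) = rinn u x + rinn u y :=
  inner_add_right u x y

lemma nbk_rinn_smul_right (u : Euc d) (c : ℝ) (y : Euc d) : rinn u (c • y) = c * rinn u y :=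
  real_inner_smul_right u y c

lemma nbk_rinn_sub_left (u v y : Euc d) : rinn (u - v) y = rinn u y - rinn v y :=
  inner_sub_left u v y

lemma nbk_rinn_smul_left (c : ℝ) (u y : Euc d) : rinn (c • u) y = c * rinn u y :=
  real_inner_smul_left u y c

lemma nbk_rinn_le (u y : Euc d) : rinn u y ≤ ‖u‖ * ‖y‖ := real_inner_le_norm u y

lemma nbk_abs_rinn_le (u y : Euc d) : |rinn u y| ≤ ‖u‖ * ‖y‖ := abs_real_inner_le_norm u y

/-- Each term is at most the conjugate. -/
lemma nbk_termB (v y : Euc d) : ((rinn v y : ℝ) : EReal) - φ y ≤ econj φ v :=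
  le_iSup (fun z => ((rinn v z : ℝ) : EReal) - φ z) y

lemma nbk_econj_ne_bot (hp : ProperE φ) (v : Euc d) : econj φ v ≠ ⊥ := by
  obtain ⟨y₀, hy₀⟩ := hp.1
  have hb := hp.2 y₀
  set r₀ := (φ y₀).toReal with hr₀
  have hco : φ y₀ = (r₀ : EReal) := (EReal.coe_toReal hy₀ hb).symm
  have h := nbk_termB (φ := φ) v y₀
  rw [hco, ← EReal.coe_sub] at h
  intro hbot
  rw [hbot] at h
  exact (EReal.bot_lt_coe _).not_ge h

/-- Supercoercivity bound outside a large ball, uniform over bounded `v`. -/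
lemma nbk_outside (hc : Supercoercive φ) (M₀ : ℝ) :
    ∃ R : ℝ, 0 ≤ R ∧ ∀ v : Euc d, ‖v‖ ≤ M₀ → ∀ y : Euc d, R ≤ ‖y‖ →
      ((rinn v y : ℝ) : EReal) - φ y ≤ ((-‖y‖ : ℝ) : EReal) := by
  obtain ⟨R, hR⟩ := hc (M₀ + 1)
  refine ⟨max R 0, le_max_right _ _, fun v hv y hy => ?_⟩
  have h1 : (((M₀ + 1) * ‖y‖ : ℝ) : EReal) ≤ φ y := hR y (le_trans (le_max_left _ _) hy)
  have h2 : ((rinn v y : ℝ) : EReal) - φ y ≤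
      ((rinn v y : ℝ) : EReal) - (((M₀ + 1) * ‖y‖ : ℝ) : EReal) :=
    EReal.sub_le_sub le_rfl h1
  refine h2.trans ?_
  rw [← EReal.coe_sub, EReal.coe_le_coe_iff]
  have h3 : rinn v y ≤ ‖v‖ * ‖y‖ := nbk_rinn_le v y
  have h4 : ‖v‖ * ‖y‖ ≤ M₀ * ‖y‖ :=
    mul_le_mul_of_nonneg_right hv (norm_nonneg _)
  nlinarith [norm_nonneg y, le_trans (le_max_right R 0) hy]

end NBKHelpers
noncomputable section NBKHelpers2

variable {d : ℕ} {φ : Euc d → EReal}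

lemma nbk_lsc_le_of_seq (hl : LowerSemicontinuous φ) {z : Euc d} {w : ℕ → Euc d}
    {r : ℕ → ℝ} {rb : ℝ} (hw : Tendsto w atTop (𝓝 z)) (hr : Tendsto r atTop (𝓝 rb))
    (heq : ∀ k, φ (w k) = ((r k : ℝ) : EReal)) : φ z ≤ (rb : EReal) := by
  by_contra hlt
  push_neg at hlt
  obtain ⟨b, hb1, hb2⟩ := EReal.exists_between_coe_real hlt
  have hev : ∀ᶠ k in atTop, (b : EReal) < φ (w k) := hw.eventually (hl z b hb2)
  have hev2 : ∀ᶠ k in atTop, b ≤ r k := hev.mono fun k hk => by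
    rw [heq k] at hk; exact (EReal.coe_lt_coe_iff.mp hk).le
  have hble : b ≤ rb := ge_of_tendsto hr hev2
  have : rb < b := EReal.coe_lt_coe_iff.mp hb1
  linarith

lemma nbk_attain (hp : ProperE φ) (hl : LowerSemicontinuous φ) (hc : Supercoercive φ)
    (v : Euc d) :
    ∃ (z : Euc d) (r : ℝ), φ z = (r : EReal) ∧ econj φ v = ((rinn v z - r : ℝ) : EReal) := by
  obtain ⟨R, hR0, hRo⟩ := nbk_outside (φ := φ) hc ‖v‖
  have hout : ∀ y : Euc d, R ≤ ‖y‖ →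
      ((rinn v y : ℝ) : EReal) - φ y ≤ ((-‖y‖ : ℝ) : EReal) := hRo v le_rfl
  have hTbot := nbk_econj_ne_bot hp v
  -- first : econj φ v ≠ ⊤
  have hTtop : econj φ v ≠ ⊤ := by
    intro htop
    have hch : ∀ j : ℕ, ∃ y : Euc d, ((j : ℝ) : EReal) < ((rinn v y : ℝ) : EReal) - φ y := by
      intro j
      have : ((j : ℝ) : EReal) < econj φ v := by rw [htop]; exact EReal.coe_lt_top _
      exact lt_iSup_iff.mp this
    choose y hy using hch
    have hytop : ∀ j, φ (y j) ≠ ⊤ := by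
      intro j h
      have := hy j
      rw [h, EReal.sub_top] at this
      exact (not_lt_bot this)
    set r : ℕ → ℝ := fun j => (φ (y j)).toReal with hrdef
    have hφy : ∀ j, φ (y j) = ((r j : ℝ) : EReal) :=
      fun j => (EReal.coe_toReal (hytop j) (hp.2 (y j))).symm
    have hyr : ∀ j : ℕ, (j : ℝ) < rinn v (y j) - r j := by
      intro j
      have := hy j
      rw [hφy j, ← EReal.coe_sub, EReal.coe_lt_coe_iff] at this
      exact this
    have hyb : ∀ j, ‖y j‖ ≤ R := by
      intro j
      by_contra hcon
      push_neg at hcon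
      have h1 := hout (y j) hcon.le
      have h2 := (hy j).trans_le h1
      rw [EReal.coe_lt_coe_iff] at h2
      have := norm_nonneg (y j)
      have : (0:ℝ) ≤ (j:ℝ) := Nat.cast_nonneg j
      linarith [norm_nonneg (y j)]
    have hmem : ∀ j, y j ∈ Metric.closedBall (0 : Euc d) R := by
      intro j; rw [Metric.mem_closedBall, dist_zero_right]; exact hyb j
    obtain ⟨z, -, g, hgm, hgt⟩ :=
      tendsto_subseq_of_bounded (Metric.isBounded_closedBall (x := (0:Euc d)) (r := R)) hmem
    have hbotlt : (⊥ : EReal) < φ z := bot_lt_iff_ne_bot.mpr (hp.2 z)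
    obtain ⟨b, -, hb2⟩ := EReal.exists_between_coe_real hbotlt
    have hev : ∀ᶠ j in atTop, (b : EReal) < φ (y (g j)) := hgt.eventually (hl z b hb2)
    have hev2 : ∀ᶠ j in atTop, b < r (g j) := hev.mono fun j hj => by
      rw [hφy (g j)] at hj; exact EReal.coe_lt_coe_iff.mp hj
    obtain ⟨J, hJ⟩ := eventually_atTop.mp hev2
    obtain ⟨j₁, hj₁⟩ := exists_nat_gt (‖v‖ * R - b)
    set j := max J j₁ with hj
    have h1 : b < r (g j) := hJ j (le_max_left _ _)
    have h2 : r (g j) < rinn v (y (g j)) - (g j : ℝ) := by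
      have := hyr (g j); linarith
    have h3 : rinn v (y (g j)) ≤ ‖v‖ * R := by
      calc rinn v (y (g j)) ≤ ‖v‖ * ‖y (g j)‖ := nbk_rinn_le _ _
        _ ≤ ‖v‖ * R := mul_le_mul_of_nonneg_left (hyb _) (norm_nonneg v)
    have h4 : (j : ℝ) ≤ (g j : ℝ) := by exact_mod_cast hgm.le_apply
    have h5 : (j₁ : ℝ) ≤ (j : ℝ) := by exact_mod_cast le_max_right J j₁
    linarith
  set tb := (econj φ v).toReal with htb
  have hT : econj φ v = (tb : EReal) := (EReal.coe_toReal hTtop hTbot).symm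
  have hch : ∀ j : ℕ, ∃ y : Euc d,
      ((tb - 1 / (j + 1) : ℝ) : EReal) < ((rinn v y : ℝ) : EReal) - φ y := by
    intro j
    have hpos : (0:ℝ) < 1 / ((j:ℝ) + 1) := by positivity
    have : ((tb - 1 / (j + 1) : ℝ) : EReal) < econj φ v := by
      rw [hT, EReal.coe_lt_coe_iff]; push_cast; linarith
    exact lt_iSup_iff.mp this
  choose y hy using hch
  have hytop : ∀ j, φ (y j) ≠ ⊤ := by
    intro j h
    have := hy j
    rw [h, EReal.sub_top] at this
    exact (not_lt_bot this)
  set r : ℕ → ℝ := fun j => (φ (y j)).toReal with hrdef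
  have hφy : ∀ j, φ (y j) = ((r j : ℝ) : EReal) :=
    fun j => (EReal.coe_toReal (hytop j) (hp.2 (y j))).symm
  have hyr : ∀ j : ℕ, tb - 1 / ((j:ℝ) + 1) < rinn v (y j) - r j := by
    intro j
    have := hy j
    rw [hφy j, ← EReal.coe_sub, EReal.coe_lt_coe_iff] at this
    exact_mod_cast this
  have hup : ∀ j, rinn v (y j) - r j ≤ tb := by
    intro j
    have h := nbk_termB (φ := φ) v (y j)
    rw [hφy j, ← EReal.coe_sub, hT, EReal.coe_le_coe_iff] at h
    exact h
  set B := max R (1 + |tb|) with hB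
  have hyb : ∀ j, ‖y j‖ ≤ B := by
    intro j
    by_contra hcon
    push_neg at hcon
    have hR' : R ≤ ‖y j‖ := le_trans (le_max_left _ _) hcon.le
    have h1 := hout (y j) hR'
    have h2 := (hy j).trans_le h1
    rw [EReal.coe_lt_coe_iff] at h2
    have h3 : 1 + |tb| < ‖y j‖ := lt_of_le_of_lt (le_max_right _ _) hcon
    have h4 : 1 / ((j:ℝ) + 1) ≤ 1 := by
      rw [div_le_one (by positivity)]; push_cast; linarith [Nat.cast_nonneg (α := ℝ) j]
    have h5 : -tb ≤ |tb| := neg_le_abs tb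
    linarith
  have hmem : ∀ j, y j ∈ Metric.closedBall (0 : Euc d) B := by
    intro j; rw [Metric.mem_closedBall, dist_zero_right]; exact hyb j
  obtain ⟨z, -, g, hgm, hgt⟩ :=
    tendsto_subseq_of_bounded (Metric.isBounded_closedBall (x := (0:Euc d)) (r := B)) hmem
  set q : ℕ → ℝ := fun j => rinn v (y j) - r j with hq
  have hlow : Tendsto (fun j => tb - 1 / ((g j : ℝ) + 1)) atTop (𝓝 tb) := by
    have h0 : Tendsto (fun j : ℕ => 1 / ((j : ℝ) + 1)) atTop (𝓝 0) :=
      tendsto_one_div_add_atTop_nhds_zero_nat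
    have h1 : Tendsto (fun j => 1 / ((g j : ℝ) + 1)) atTop (𝓝 0) :=
      h0.comp hgm.tendsto_atTop
    simpa using tendsto_const_nhds.sub h1
  have hqt : Tendsto (fun j => q (g j)) atTop (𝓝 tb) := by
    refine tendsto_of_tendsto_of_tendsto_of_le_of_le hlow tendsto_const_nhds
      (fun j => (hyr (g j)).le) (fun j => hup (g j))
  have hinner : Tendsto (fun j => rinn v (y (g j))) atTop (𝓝 (rinn v z)) := by
    have hcont : Continuous fun w : Euc d => rinn v w := by
      simp only [rinn]; exact Continuous.inner continuous_const continuous_id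
    exact (hcont.tendsto z).comp hgt
  have hrt : Tendsto (fun j => r (g j)) atTop (𝓝 (rinn v z - tb)) := by
    have : (fun j => r (g j)) = fun j => rinn v (y (g j)) - q (g j) := by
      funext j; simp [hq]
    rw [this]
    exact hinner.sub hqt
  have hφz : φ z ≤ ((rinn v z - tb : ℝ) : EReal) :=
    nbk_lsc_le_of_seq hl hgt hrt (fun j => hφy (g j))
  have hzt : φ z ≠ ⊤ := fun h => by rw [h] at hφz; exact (EReal.coe_lt_top _).not_ge hφz
  set ρ := (φ z).toReal with hρ
  have hφzc : φ z = (ρ : EReal) := (EReal.coe_toReal hzt (hp.2 z)).symm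
  have hρle : ρ ≤ rinn v z - tb := by
    rw [hφzc, EReal.coe_le_coe_iff] at hφz; exact hφz
  refine ⟨z, ρ, hφzc, le_antisymm ?_ ?_⟩
  · rw [hT, EReal.coe_le_coe_iff]; linarith
  · have h := nbk_termB (φ := φ) v z
    rw [hφzc, ← EReal.coe_sub] at h
    exact h

end NBKHelpers2
noncomputable section NBKHelpers3

variable {d : ℕ} {φ : Euc d → EReal}

lemma nbk_econj_coe (hp : ProperE φ) (hl : LowerSemicontinuous φ) (hc : Supercoercive φ)
    (v : Euc d) : econj φ v = ((rconj φ v : ℝ) : EReal) := by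
  obtain ⟨z, r, -, he⟩ := nbk_attain hp hl hc v
  unfold rconj
  rw [he, EReal.toReal_coe]

lemma nbk_rconj_attain (hp : ProperE φ) (hl : LowerSemicontinuous φ) (hc : Supercoercive φ)
    (v : Euc d) :
    ∃ (z : Euc d) (r : ℝ), φ z = (r : EReal) ∧ rconj φ v = rinn v z - r := by
  obtain ⟨z, r, hz, he⟩ := nbk_attain hp hl hc v
  refine ⟨z, r, hz, ?_⟩
  unfold rconj
  rw [he, EReal.toReal_coe]

lemma nbk_rconj_ge (hp : ProperE φ) (hl : LowerSemicontinuous φ) (hc : Supercoercive φ)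
    (v y : Euc d) (r : ℝ) (hy : φ y = (r : EReal)) : rinn v y - r ≤ rconj φ v := by
  have h := nbk_termB (φ := φ) v y
  rw [hy, ← EReal.coe_sub, nbk_econj_coe hp hl hc, EReal.coe_le_coe_iff] at h
  exact h

/-- Fenchel–Young equality at a subgradient pair. -/
lemma nbk_fenchel_eq (hp : ProperE φ) (hl : LowerSemicontinuous φ) (hc : Supercoercive φ)
    {x u : Euc d} (hu : u ∈ subdiff φ x) :
    ∃ p : ℝ, φ x = (p : EReal) ∧ rconj φ u = rinn u x - p := by
  obtain ⟨hxt, hsub⟩ := hu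
  set p := (φ x).toReal with hp'
  have hφx : φ x = (p : EReal) := (EReal.coe_toReal hxt (hp.2 x)).symm
  refine ⟨p, hφx, le_antisymm ?_ (nbk_rconj_ge hp hl hc u x p hφx)⟩
  have hle : econj φ u ≤ ((rinn u x - p : ℝ) : EReal) := by
    refine iSup_le fun y => ?_
    by_cases hyt : φ y = ⊤
    · rw [hyt, EReal.sub_top]; exact bot_le
    · set q := (φ y).toReal with hq'
      have hφy : φ y = (q : EReal) := (EReal.coe_toReal hyt (hp.2 y)).symm
      have h := hsub y
      rw [hφx, hφy, ← EReal.coe_add, EReal.coe_le_coe_iff] at h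
      rw [hφy, ← EReal.coe_sub, EReal.coe_le_coe_iff]
      have := nbk_rinn_sub_right u y x
      linarith [h, this.symm.le]
  rw [nbk_econj_coe hp hl hc, EReal.coe_le_coe_iff] at hle
  exact hle

/-- The subdifferential is injective under essential strict convexity. -/
lemma nbk_subdiff_inj (hp : ProperE φ) (hri : ddom φ = intrinsicInterior ℝ (edom φ))
    (hst : EssStrictConvexE φ) {x y u : Euc d}
    (hux : u ∈ subdiff φ x) (huy : u ∈ subdiff φ y) : x = y := by
  by_contra hxy
  have hx : x ∈ intrinsicInterior ℝ (edom φ) := hri ▸ ⟨u, hux⟩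
  have hy : y ∈ intrinsicInterior ℝ (edom φ) := hri ▸ ⟨u, huy⟩
  have hstrict := hst x hx y hy hxy (1/2) (by norm_num) (by norm_num)
  set m := (1/2 : ℝ) • x + (1 - 1/2 : ℝ) • y with hm
  set p := (φ x).toReal with hpd
  set q := (φ y).toReal with hqd
  have hφx : φ x = (p : EReal) := (EReal.coe_toReal hux.1 (hp.2 x)).symm
  have hφy : φ y = (q : EReal) := (EReal.coe_toReal huy.1 (hp.2 y)).symm
  have hrhs : ((1/2 : ℝ) : EReal) * φ x + ((1 - 1/2 : ℝ) : EReal) * φ y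
      = ((p/2 + q/2 : ℝ) : EReal) := by
    rw [hφx, hφy]
    norm_cast
    ring
  rw [hrhs] at hstrict
  have hmt : φ m ≠ ⊤ := fun h => by rw [h] at hstrict; exact (not_top_lt hstrict)
  have h1 := hux.2 m
  have h2 := huy.2 m
  rw [hφx] at h1
  rw [hφy] at h2
  have hmb : φ m ≠ ⊥ := hp.2 m
  set μ := (φ m).toReal with hμd
  have hφm : φ m = (μ : EReal) := (EReal.coe_toReal hmt hmb).symm
  rw [hφm, ← EReal.coe_add, EReal.coe_le_coe_iff] at h1 h2
  rw [hφm, EReal.coe_lt_coe_iff] at hstrict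
  have hsum : rinn u (m - x) + rinn u (m - y) = 0 := by
    rw [← nbk_rinn_add_right]
    have : (m - x) + (m - y) = 0 := by
      rw [hm]; module
    rw [this, rinn]
    simp
  linarith

lemma nbk_rconj_convexOn (hp : ProperE φ) (hl : LowerSemicontinuous φ) (hc : Supercoercive φ) :
    ConvexOn ℝ Set.univ (rconj φ) := by
  refine ⟨convex_univ, fun v _ w _ a b ha hb hab => ?_⟩
  obtain ⟨z, r, hz, he⟩ := nbk_rconj_attain hp hl hc (a • v + b • w)
  have h1 : rinn v z - r ≤ rconj φ v := nbk_rconj_ge hp hl hc v z r hz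
  have h2 : rinn w z - r ≤ rconj φ w := nbk_rconj_ge hp hl hc w z r hz
  have hlin : rinn (a • v + b • w) z = a * rinn v z + b * rinn w z := by
    rw [rinn, inner_add_left, real_inner_smul_left, real_inner_smul_left]; rfl
  have e1 : a * (rinn v z - r) ≤ a * rconj φ v := mul_le_mul_of_nonneg_left h1 ha
  have e2 : b * (rinn w z - r) ≤ b * rconj φ w := mul_le_mul_of_nonneg_left h2 hb
  rw [he, hlin]
  simp only [smul_eq_mul]
  have hr : a * r + b * r = r := by rw [← add_mul, hab, one_mul]
  ring_nf at e1 e2 ⊢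
  linarith [e1, e2, hr]

lemma nbk_rconj_cont (hp : ProperE φ) (hl : LowerSemicontinuous φ) (hc : Supercoercive φ) :
    Continuous (rconj φ) := by
  have h := (nbk_rconj_convexOn hp hl hc).continuousOn isOpen_univ
  rw [← continuousOn_univ]
  exact h

end NBKHelpers3
noncomputable section NBKHelpers4

variable {d : ℕ}

lemma nbk_norm_nonneg {N : Euc d → ℝ} (hN : IsANorm N) (y : Euc d) : 0 ≤ N y := by
  have h0 : N 0 = 0 := (hN.1 0).mpr rfl
  have hneg : N (-y) = N y := by
    have := hN.2.1 (-1) y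
    simpa using this
  have := hN.2.2 y (-y)
  rw [add_neg_cancel, h0, hneg] at this
  linarith

lemma nbk_norm_cont {N : Euc d → ℝ} (hN : IsANorm N) : Continuous N := by
  have hconv : ConvexOn ℝ Set.univ N := by
    refine ⟨convex_univ, fun p _ q _ a b ha hb hab => ?_⟩
    calc N (a • p + b • q) ≤ N (a • p) + N (b • q) := hN.2.2 _ _
      _ = |a| * N p + |b| * N q := by rw [hN.2.1, hN.2.1]
      _ = a * N p + b * N q := by rw [abs_of_nonneg ha, abs_of_nonneg hb]
      _ = a • N p + b • N q := by simp [smul_eq_mul]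
  have h := hconv.continuousOn isOpen_univ
  rw [← continuousOn_univ]
  exact h

lemma nbk_dualN_pos {N : Euc d → ℝ} (hN : IsANorm N) {a : Euc d} (ha : a ≠ 0) :
    0 < dualN N a := by
  -- minimum of N on the unit sphere
  have hane : ‖a‖ ≠ 0 := norm_ne_zero_iff.mpr ha
  have hu₀ : ‖a‖⁻¹ • a ∈ Metric.sphere (0 : Euc d) 1 := by
    rw [Metric.mem_sphere, dist_zero_right, norm_smul]
    simp [abs_of_nonneg (inv_nonneg.mpr (norm_nonneg a)), inv_mul_cancel₀ hane]
  obtain ⟨w, hw, hwmin⟩ := (isCompact_sphere (0 : Euc d) 1).exists_isMinOn ⟨_, hu₀⟩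
    (nbk_norm_cont hN).continuousOn
  have hwn : ‖w‖ = 1 := by rwa [Metric.mem_sphere, dist_zero_right] at hw
  have hw0 : w ≠ 0 := fun h => by rw [h, norm_zero] at hwn; norm_num at hwn
  set m := N w with hm
  have hmpos : 0 < m := lt_of_le_of_ne (nbk_norm_nonneg hN w)
    (fun h => hw0 ((hN.1 w).mp h.symm))
  have hlow : ∀ y : Euc d, m * ‖y‖ ≤ N y := by
    intro y
    rcases eq_or_ne y 0 with rfl | hy0
    · simp [(hN.1 0).mpr rfl]
    · have hyn : ‖y‖ ≠ 0 := norm_ne_zero_iff.mpr hy0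
      have hmem : ‖y‖⁻¹ • y ∈ Metric.sphere (0 : Euc d) 1 := by
        rw [Metric.mem_sphere, dist_zero_right, norm_smul]
        simp [abs_of_nonneg (inv_nonneg.mpr (norm_nonneg y)), inv_mul_cancel₀ hyn]
      have h1 : m ≤ N (‖y‖⁻¹ • y) := hwmin hmem
      rw [hN.2.1] at h1
      rw [abs_of_nonneg (inv_nonneg.mpr (norm_nonneg y))] at h1
      have h2 := mul_le_mul_of_nonneg_left h1 (norm_nonneg y)
      calc m * ‖y‖ = ‖y‖ * m := mul_comm _ _
        _ ≤ ‖y‖ * (‖y‖⁻¹ * N y) := h2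
        _ = N y := by field_simp
  have hbdd : BddAbove {r : ℝ | ∃ y : Euc d, N y ≤ 1 ∧ r = rinn a y} := by
    refine ⟨‖a‖ * m⁻¹, fun r hr => ?_⟩
    obtain ⟨y, hy1, rfl⟩ := hr
    have hyb : ‖y‖ ≤ m⁻¹ := by
      rw [← one_div, le_div_iff₀ hmpos]
      nlinarith [hlow y, hy1]
    calc rinn a y ≤ ‖a‖ * ‖y‖ := nbk_rinn_le a y
      _ ≤ ‖a‖ * m⁻¹ := mul_le_mul_of_nonneg_left hyb (norm_nonneg a)
  have hNa : 0 < N a := lt_of_le_of_ne (nbk_norm_nonneg hN a)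
    (fun h => ha ((hN.1 a).mp h.symm))
  have hmem : rinn a ((N a)⁻¹ • a) ∈ {r : ℝ | ∃ y : Euc d, N y ≤ 1 ∧ r = rinn a y} := by
    refine ⟨(N a)⁻¹ • a, ?_, rfl⟩
    rw [hN.2.1, abs_of_nonneg (inv_nonneg.mpr hNa.le), inv_mul_cancel₀ hNa.ne']
  have hval : rinn a ((N a)⁻¹ • a) = (N a)⁻¹ * ‖a‖ ^ 2 := by
    rw [nbk_rinn_smul_right, rinn, real_inner_self_eq_norm_sq]
  have hpos : 0 < rinn a ((N a)⁻¹ • a) := by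
    rw [hval]
    positivity
  have := le_csSup hbdd hmem
  calc (0:ℝ) < rinn a ((N a)⁻¹ • a) := hpos
    _ ≤ dualN N a := this

/-- A linear functional minorized on a set and equal to the bound at an intrinsic interior
point is constant on the set. -/
lemma nbk_hyper_const {s : Set (Euc d)} {z a : Euc d} {β : ℝ}
    (hz : z ∈ intrinsicInterior ℝ s) (hza : rinn a z = β)
    (hle : ∀ y ∈ s, β ≤ rinn a y) : ∀ y ∈ s, rinn a y = β := by
  intro y hy
  refine le_antisymm ?_ (hle y hy)
  obtain ⟨z', hz'int, hz'⟩ := hz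
  obtain ⟨t, hts, htopen, hz't⟩ := mem_interior.mp hz'int
  obtain ⟨O, hOopen, hOt⟩ := isOpen_induced_iff.mp htopen
  have hzO : z ∈ O := by
    have : z' ∈ ((↑) ⁻¹' O : Set (affineSpan ℝ s)) := by rw [hOt]; exact hz't
    rwa [Set.mem_preimage, hz'] at this
  obtain ⟨ε, hε, hball⟩ := Metric.isOpen_iff.mp hOopen z hzO
  set δ := ε / (2 * (‖z - y‖ + 1)) with hδ
  have hδpos : 0 < δ := by positivity
  set w := δ • (z - y) + z with hw
  have hwspan : w ∈ affineSpan ℝ s := by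
    have hzs : z ∈ affineSpan ℝ s := by rw [← hz']; exact z'.2
    have hys : y ∈ affineSpan ℝ s := subset_affineSpan ℝ s hy
    have := AffineSubspace.smul_vsub_vadd_mem (affineSpan ℝ s) δ hzs hys hzs
    simpa [vsub_eq_sub, vadd_eq_add, hw] using this
  have hwO : w ∈ O := by
    apply hball
    rw [Metric.mem_ball, dist_eq_norm]
    have : w - z = δ • (z - y) := by rw [hw]; abel
    rw [this, norm_smul, Real.norm_eq_abs, abs_of_pos hδpos]
    have h1 : ‖z - y‖ < ‖z - y‖ + 1 := by linarith
    have h2 : δ * ‖z - y‖ ≤ δ * (‖z - y‖ + 1) := by nlinarith [hδpos.le]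
    have h3 : δ * (‖z - y‖ + 1) = ε / 2 := by
      rw [hδ]; field_simp
    linarith [hε]
  have hws : w ∈ s := by
    have : (⟨w, hwspan⟩ : affineSpan ℝ s) ∈ ((↑) ⁻¹' O : Set (affineSpan ℝ s)) := hwO
    rw [hOt] at this
    exact hts this
  have := hle w hws
  rw [hw, nbk_rinn_add_right, nbk_rinn_smul_right, nbk_rinn_sub_right, hza] at this
  nlinarith [hδpos]

end NBKHelpers4
noncomputable section NBKHelpers5

variable {d : ℕ} {φ : Euc d → EReal}

lemma nbk_rinn_expand (u a y : Euc d) (s : ℝ) :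
    rinn (u - s • a) y = rinn u y - s * rinn a y := by
  rw [nbk_rinn_sub_left, nbk_rinn_smul_left]

lemma nbk_gconst (hp : ProperE φ) (hl : LowerSemicontinuous φ) (hc : Supercoercive φ)
    (u a : Euc d) (β : ℝ) (hconst : ∀ y : Euc d, φ y ≠ ⊤ → rinn a y = β) :
    ∀ s : ℝ, rconj φ (u - s • a) + s * β = rconj φ u := by
  intro s
  obtain ⟨zs, rs, hzs, hes⟩ := nbk_rconj_attain hp hl hc (u - s • a)
  obtain ⟨z0, r0, hz0, he0⟩ := nbk_rconj_attain hp hl hc u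
  have h1 : rinn a zs = β := hconst zs (by rw [hzs]; exact EReal.coe_ne_top rs)
  have h2 : rinn a z0 = β := hconst z0 (by rw [hz0]; exact EReal.coe_ne_top r0)
  have hle1 : rconj φ (u - s • a) + s * β ≤ rconj φ u := by
    have hge := nbk_rconj_ge hp hl hc u zs rs hzs
    rw [hes, nbk_rinn_expand, h1]
    linarith
  have hle2 : rconj φ u ≤ rconj φ (u - s • a) + s * β := by
    have hge := nbk_rconj_ge hp hl hc (u - s • a) z0 r0 hz0
    rw [nbk_rinn_expand, h2] at hge
    rw [he0]
    linarith
  linarith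

/-- A continuous function with affine minorants of positive and negative slope
attains its minimum. -/
lemma nbk_min_of_coercive (G : ℝ → ℝ) (hGc : Continuous G) (A dP B dM : ℝ)
    (hdP : 0 < dP) (hdM : dM < 0) (hbP : ∀ s : ℝ, A + s * dP ≤ G s)
    (hbM : ∀ s : ℝ, B + s * dM ≤ G s) : ∃ t : ℝ, ∀ s : ℝ, G t ≤ G s := by
  set q1 := (G 0 - A) / dP
  set q2 := (G 0 - B) / dM
  set R := max 0 (max q1 (-q2)) with hRdef
  have hR0 : (0:ℝ) ≤ R := le_max_left _ _
  have hRa : q1 ≤ R := (le_max_left _ _).trans (le_max_right _ _)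
  have hRb : -q2 ≤ R := (le_max_right _ _).trans (le_max_right _ _)
  have h0mem : (0:ℝ) ∈ Set.Icc (-R) R := Set.mem_Icc.mpr ⟨by linarith, hR0⟩
  obtain ⟨t₀, ht₀, hmin⟩ := (isCompact_Icc (a := -R) (b := R)).exists_isMinOn
    ⟨0, h0mem⟩ hGc.continuousOn
  have hg0 : G t₀ ≤ G 0 := hmin h0mem
  refine ⟨t₀, fun s => ?_⟩
  by_cases hs : s ∈ Set.Icc (-R) R
  · exact hmin hs
  · rw [Set.mem_Icc, not_and_or] at hs
    have hout : G 0 ≤ G s := by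
      rcases hs with hs | hs
      · push_neg at hs
        have hsq : s ≤ q2 := by linarith
        have h3 : q2 * dM ≤ s * dM := mul_le_mul_of_nonpos_right hsq hdM.le
        have hq : q2 * dM = G 0 - B := div_mul_cancel₀ _ hdM.ne
        have := hbM s
        linarith
      · push_neg at hs
        have hsq : q1 ≤ s := by linarith
        have h3 : q1 * dP ≤ s * dP := mul_le_mul_of_nonneg_right hsq hdP.le
        have hq : q1 * dP = G 0 - A := div_mul_cancel₀ _ hdP.ne'
        have := hbP s
        linarith
    linarith

lemma nbk_exmin (hp : ProperE φ) (hl : LowerSemicontinuous φ) (hc : Supercoercive φ)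
    (u a : Euc d) (β : ℝ)
    (hz : ∃ z : Euc d, φ z ≠ ⊤ ∧ z ∈ intrinsicInterior ℝ (edom φ) ∧ rinn a z = β) :
    ∃ t : ℝ, ∀ s : ℝ, rconj φ (u - t • a) + t * β ≤ rconj φ (u - s • a) + s * β := by
  have hA : ∀ (s : ℝ) (y : Euc d) (ry : ℝ), φ y = (ry : EReal) →
      (rinn u y - ry) + s * (β - rinn a y) ≤ rconj φ (u - s • a) + s * β := by
    intro s y ry hy
    have hge := nbk_rconj_ge hp hl hc (u - s • a) y ry hy
    rw [nbk_rinn_expand] at hge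
    linarith
  by_cases hcase1 : ∃ y : Euc d, φ y ≠ ⊤ ∧ rinn a y < β
  · by_cases hcase2 : ∃ y : Euc d, φ y ≠ ⊤ ∧ β < rinn a y
    · -- coercive case
      obtain ⟨yp, hypt, hyp⟩ := hcase1
      obtain ⟨ym, hymt, hym⟩ := hcase2
      have hφyp : φ yp = (((φ yp).toReal : ℝ) : EReal) :=
        (EReal.coe_toReal hypt (hp.2 yp)).symm
      have hφym : φ ym = (((φ ym).toReal : ℝ) : EReal) :=
        (EReal.coe_toReal hymt (hp.2 ym)).symm
      have hc1 : Continuous fun s : ℝ => u - s • a := continuous_const.sub (continuous_id.smul continuous_const)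
      have hgc : Continuous fun s : ℝ => rconj φ (u - s • a) + s * β :=
        ((nbk_rconj_cont hp hl hc).comp hc1).add (continuous_id.mul continuous_const)
      exact nbk_min_of_coercive _ hgc (rinn u yp - (φ yp).toReal) (β - rinn a yp)
        (rinn u ym - (φ ym).toReal) (β - rinn a ym) (by linarith) (by linarith)
        (fun s => hA s yp _ hφyp) (fun s => hA s ym _ hφym)
    · push_neg at hcase2
      obtain ⟨z, hzt, hzi, hza⟩ := hz
      have hconst : ∀ y : Euc d, φ y ≠ ⊤ → rinn a y = β := by
        intro y hy
        have hneg : ∀ w ∈ edom φ, -β ≤ rinn (-a) w := by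
          intro w hw
          have hw' : rinn (-a) w = -rinn a w := inner_neg_left a w
          rw [hw']
          have := hcase2 w hw
          linarith
        have hzneg : rinn (-a) z = -β := by
          have h' : rinn (-a) z = -rinn a z := inner_neg_left a z
          rw [h', hza]
        have h := nbk_hyper_const (s := edom φ) hzi hzneg hneg y hy
        have h2 : rinn (-a) y = -rinn a y := inner_neg_left a y
        rw [h2] at h
        linarith
      refine ⟨0, fun s => ?_⟩
      have h1 := nbk_gconst hp hl hc u a β hconst s
      have h2 := nbk_gconst hp hl hc u a β hconst 0
      linarith
  · push_neg at hcase1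
    obtain ⟨z, hzt, hzi, hza⟩ := hz
    have hconst : ∀ y : Euc d, φ y ≠ ⊤ → rinn a y = β :=
      fun y hy => nbk_hyper_const (s := edom φ) hzi hza (fun w hw => hcase1 w hw) y hy
    refine ⟨0, fun s => ?_⟩
    have h1 := nbk_gconst hp hl hc u a β hconst s
    have h2 := nbk_gconst hp hl hc u a β hconst 0
    linarith

end NBKHelpers5
noncomputable section NBKHelpers6

variable {d : ℕ} {φ : Euc d → EReal}

/-- Core lemma: if `0` minimizes the dual line objective, the residual is zero. -/
lemma nbk_core (hp : ProperE φ) (hl : LowerSemicontinuous φ) (hc : Supercoercive φ)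
    (hri : ddom φ = intrinsicInterior ℝ (edom φ)) (hst : EssStrictConvexE φ)
    {x u : Euc d} (hu : u ∈ subdiff φ x) (a : Euc d) (c : ℝ)
    (hmin : ∀ s : ℝ, rconj φ u ≤ rconj φ (u - s • a) + s * (rinn a x - c)) : c = 0 := by
  by_contra hc0
  obtain ⟨p, hφx, hfy⟩ := nbk_fenchel_eq hp hl hc hu
  set β := rinn a x - c with hβ
  set sk : ℕ → ℝ := fun k => c / ((k : ℝ) + 1) with hsk
  have hch : ∀ k : ℕ, ∃ (z : Euc d) (r : ℝ), φ z = (r : EReal) ∧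
      rconj φ (u - sk k • a) = rinn (u - sk k • a) z - r :=
    fun k => nbk_rconj_attain hp hl hc _
  choose z r hφz he using hch
  have hE2 : ∀ k : ℕ, rconj φ u - sk k * rinn a x ≤ rconj φ (u - sk k • a) := by
    intro k
    have hge := nbk_rconj_ge hp hl hc (u - sk k • a) x p hφx
    rw [nbk_rinn_expand] at hge
    rw [hfy]
    linarith
  have hE3 : ∀ k : ℕ, rconj φ (u - sk k • a) + sk k * rinn a (z k) ≤ rconj φ u := by
    intro k
    have hge := nbk_rconj_ge hp hl hc u (z k) (r k) (hφz k)
    have hek := he k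
    rw [nbk_rinn_expand] at hek
    linarith
  have hstar : ∀ k : ℕ, c * rinn a (z k) ≤ c * β := by
    intro k
    have hkpos : (0:ℝ) < (k : ℝ) + 1 := by positivity
    have hle : sk k * rinn a (z k) ≤ sk k * β := by
      have h3 := hE3 k
      have h4 := hmin (sk k)
      linarith
    have h6 : ((k:ℝ) + 1) * (sk k * rinn a (z k)) ≤ ((k:ℝ) + 1) * (sk k * β) :=
      mul_le_mul_of_nonneg_left hle hkpos.le
    have h7 : ((k:ℝ) + 1) * sk k = c := by
      rw [hsk]; field_simp
    calc c * rinn a (z k) = ((k:ℝ) + 1) * (sk k * rinn a (z k)) := by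
          rw [← mul_assoc, h7]
      _ ≤ ((k:ℝ) + 1) * (sk k * β) := h6
      _ = c * β := by rw [← mul_assoc, h7]
  -- bounds on the maximizers
  obtain ⟨R, hR0, hout⟩ := nbk_outside (φ := φ) hc (‖u‖ + |c| * ‖a‖)
  have hskb : ∀ k : ℕ, |sk k| ≤ |c| := by
    intro k
    rw [hsk]
    simp only
    rw [abs_div]
    have h1 : |((k:ℝ) + 1)| = (k:ℝ) + 1 := abs_of_pos (by positivity)
    rw [h1]
    have h2 : (1:ℝ) ≤ (k:ℝ) + 1 := by linarith [Nat.cast_nonneg (α := ℝ) k]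
    exact div_le_self (abs_nonneg c) h2
  have hvb : ∀ k : ℕ, ‖u - sk k • a‖ ≤ ‖u‖ + |c| * ‖a‖ := by
    intro k
    calc ‖u - sk k • a‖ ≤ ‖u‖ + ‖sk k • a‖ := norm_sub_le _ _
      _ = ‖u‖ + |sk k| * ‖a‖ := by rw [norm_smul, Real.norm_eq_abs]
      _ ≤ ‖u‖ + |c| * ‖a‖ := by
          have := mul_le_mul_of_nonneg_right (hskb k) (norm_nonneg a)
          linarith
  set L := |rconj φ u| + |c| * |rinn a x| with hL
  have hzb : ∀ k : ℕ, ‖z k‖ ≤ max R L := by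
    intro k
    rcases lt_or_ge ‖z k‖ R with hlt | hge
    · exact hlt.le.trans (le_max_left _ _)
    · have h1 := hout (u - sk k • a) (hvb k) (z k) hge
      rw [hφz k, ← EReal.coe_sub, EReal.coe_le_coe_iff] at h1
      have h2 : rconj φ (u - sk k • a) ≤ -‖z k‖ := by rw [he k]; linarith
      have h3 := hE2 k
      have h4 : |sk k * rinn a x| ≤ |c| * |rinn a x| := by
        rw [abs_mul]
        exact mul_le_mul_of_nonneg_right (hskb k) (abs_nonneg _)
      have h5 : -|rconj φ u| ≤ rconj φ u := neg_abs_le _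
      have h6 : sk k * rinn a x ≤ |sk k * rinn a x| := le_abs_self _
      have : ‖z k‖ ≤ L := by rw [hL]; linarith
      exact this.trans (le_max_right _ _)
  have hmem : ∀ k, z k ∈ Metric.closedBall (0 : Euc d) (max R L) := by
    intro k; rw [Metric.mem_closedBall, dist_zero_right]; exact hzb k
  obtain ⟨zb, -, g, hgm, hgt⟩ :=
    tendsto_subseq_of_bounded (Metric.isBounded_closedBall (x := (0:Euc d)) (r := max R L)) hmem
  -- limits
  have hs0 : Tendsto (fun j => sk (g j)) atTop (𝓝 0) := by
    have h0 : Tendsto (fun j : ℕ => 1 / ((j : ℝ) + 1)) atTop (𝓝 0) :=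
      tendsto_one_div_add_atTop_nhds_zero_nat
    have h1 : Tendsto (fun j : ℕ => c * (1 / ((j : ℝ) + 1))) atTop (𝓝 (c * 0)) :=
      h0.const_mul c
    have h2 : (fun j : ℕ => sk j) = fun j : ℕ => c * (1 / ((j : ℝ) + 1)) := by
      funext j; rw [hsk]; field_simp
    rw [mul_zero] at h1
    have h3 : Tendsto (fun j : ℕ => sk j) atTop (𝓝 0) := by rw [h2]; exact h1
    exact h3.comp hgm.tendsto_atTop
  have hinna : Tendsto (fun j => rinn a (z (g j))) atTop (𝓝 (rinn a zb)) := by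
    have hcont : Continuous fun w : Euc d => rinn a w := by
      simp only [rinn]; exact Continuous.inner continuous_const continuous_id
    exact (hcont.tendsto zb).comp hgt
  have hinnu : Tendsto (fun j => rinn u (z (g j))) atTop (𝓝 (rinn u zb)) := by
    have hcont : Continuous fun w : Euc d => rinn u w := by
      simp only [rinn]; exact Continuous.inner continuous_const continuous_id
    exact (hcont.tendsto zb).comp hgt
  have hprod : Tendsto (fun j => sk (g j) * rinn a (z (g j))) atTop (𝓝 0) := by
    have := hs0.mul hinna
    rwa [zero_mul] at this
  have hEt : Tendsto (fun j => rconj φ (u - sk (g j) • a)) atTop (𝓝 (rconj φ u)) := by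
    have hlow : Tendsto (fun j => rconj φ u - sk (g j) * rinn a x) atTop (𝓝 (rconj φ u)) := by
      have h1 : Tendsto (fun j => sk (g j) * rinn a x) atTop (𝓝 0) := by
        have := hs0.mul_const (rinn a x)
        rwa [zero_mul] at this
      have h2 : Tendsto (fun j : ℕ => rconj φ u - sk (g j) * rinn a x) atTop
          (𝓝 (rconj φ u - 0)) := Tendsto.sub tendsto_const_nhds h1
      simpa using h2
    have hup : Tendsto (fun j => rconj φ u - sk (g j) * rinn a (z (g j))) atTop
        (𝓝 (rconj φ u)) := by
      have h2 : Tendsto (fun j : ℕ => rconj φ u - sk (g j) * rinn a (z (g j))) atTop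
          (𝓝 (rconj φ u - 0)) := Tendsto.sub tendsto_const_nhds hprod
      simpa using h2
    exact tendsto_of_tendsto_of_tendsto_of_le_of_le hlow hup
      (fun j => hE2 (g j)) (fun j => by linarith [hE3 (g j)])
  have hrt : Tendsto (fun j => r (g j)) atTop (𝓝 (rinn u zb - rconj φ u)) := by
    have heq : (fun j => r (g j)) = fun j =>
        (rinn u (z (g j)) - sk (g j) * rinn a (z (g j))) - rconj φ (u - sk (g j) • a) := by
      funext j
      have hek := he (g j)
      rw [nbk_rinn_expand] at hek
      linarith
    rw [heq]
    have h1 := (hinnu.sub hprod).sub hEt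
    rwa [sub_zero] at h1
  have hφzb : φ zb ≤ ((rinn u zb - rconj φ u : ℝ) : EReal) :=
    nbk_lsc_le_of_seq hl hgt hrt (fun j => hφz (g j))
  have hzt : φ zb ≠ ⊤ := fun h => by rw [h] at hφzb; exact (EReal.coe_lt_top _).not_ge hφzb
  set ρ := (φ zb).toReal with hρd
  have hφzb' : φ zb = (ρ : EReal) := (EReal.coe_toReal hzt (hp.2 zb)).symm
  have hρ : ρ ≤ rinn u zb - rconj φ u := by
    rw [hφzb', EReal.coe_le_coe_iff] at hφzb; exact hφzb
  have hsub : u ∈ subdiff φ zb := by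
    refine ⟨hzt, fun y => ?_⟩
    by_cases hyt : φ y = ⊤
    · rw [hyt]; exact le_top
    · have hφy : φ y = (((φ y).toReal : ℝ) : EReal) := (EReal.coe_toReal hyt (hp.2 y)).symm
      have hge := nbk_rconj_ge hp hl hc u y ((φ y).toReal) hφy
      rw [hφzb', hφy, ← EReal.coe_add, EReal.coe_le_coe_iff, nbk_rinn_sub_right]
      linarith
  have hxz : zb = x := nbk_subdiff_inj hp hri hst hsub hu
  have hlim : Tendsto (fun j => c * rinn a (z (g j))) atTop (𝓝 (c * rinn a zb)) :=
    hinna.const_mul c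
  have hfin : c * rinn a zb ≤ c * β :=
    le_of_tendsto hlim (Filter.Eventually.of_forall fun j => hstar (g j))
  rw [hxz, hβ] at hfin
  have hsq : c ^ 2 ≤ 0 := by nlinarith
  have := sq_nonneg c
  have hcz : c ^ 2 = 0 := le_antisymm hsq this
  exact hc0 (pow_eq_zero_iff (n := 2) (by norm_num) |>.mp hcz)

end NBKHelpers6
/-- fixed points of the NBK method. -/
theorem statement1 {d n : ℕ} (φ : Euc d → EReal) (C Dset : Set (Euc d))
    (f : Fin n → Euc d → ℝ) (f' : Fin n → Euc d → Euc d)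
    (hφ : PhiAssump φ C) (hB : BregCont φ) (hf : FAssump f f' Dset C)
    (hS : (solSet f C).Nonempty)
    (σ : ℝ) (hσ : 0 < σ) (N : Euc d → ℝ) (hN : IsANorm N)
    (x u : Euc d) (hx : x ∈ ddom φ) (hu : u ∈ subdiff φ x) :
    (∀ (i : Fin n) (x' u' : Euc d), NBKStep φ σ N f f' i x u x' u' → x' = x ∧ u' = u) ↔
      ∀ i : Fin n, f i x = 0 ∨ f' i x = 0 := by
  constructor
  · intro Hfix i
    by_contra hbad
    rw [not_or] at hbad
    obtain ⟨hc0, ha0⟩ := hbad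
    have hp := hφ.proper
    have hl := hφ.lsc
    have hco := hφ.coercive
    by_cases hH : (linHyp f f' i x ∩ ddom φ).Nonempty
    · obtain ⟨z, hzH, hzD⟩ := hH
      have hzt : φ z ≠ ⊤ := by obtain ⟨w, hw⟩ := hzD; exact hw.1
      have hzi : z ∈ intrinsicInterior ℝ (edom φ) := by
        have h := hzD; rwa [hφ.ri_eq] at h
      have hza : rinn (f' i x) z = rinn (f' i x) x - f i x := by
        have hmem : f i x + rinn (f' i x) (z - x) = 0 := hzH
        rw [nbk_rinn_sub_right] at hmem
        linarith
      obtain ⟨t₀, hmin⟩ := nbk_exmin hp hl hco u (f' i x) (rinn (f' i x) x - f i x)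
        ⟨z, hzt, hzi, hza⟩
      have hstep : NBKStep φ σ N f f' i x u
          (gradconj φ (u - t₀ • f' i x)) (u - t₀ • f' i x) := by
        refine ⟨fun h => absurd h (not_or.mpr ⟨hc0, ha0⟩),
          fun _ => ⟨t₀, fun _ s => ?_, fun h => absurd ⟨z, hzH, hzD⟩ h, rfl, rfl⟩⟩
        simp only [lineObj]
        exact hmin s
      obtain ⟨-, hueq⟩ := Hfix i _ _ hstep
      have ht0 : t₀ = 0 := by
        rcases smul_eq_zero.mp (sub_eq_self.mp hueq) with h | h
        · exact h
        · exact absurd h ha0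
      have hmin0 : ∀ s : ℝ, rconj φ u ≤
          rconj φ (u - s • f' i x) + s * (rinn (f' i x) x - f i x) := by
        intro s
        have h := hmin s
        rw [ht0] at h
        simpa using h
      exact hc0 (nbk_core hp hl hco hφ.ri_eq hφ.essstrict hu (f' i x) (f i x) hmin0)
    · have hstep : NBKStep φ σ N f f' i x u
          (gradconj φ (u - (σ * f i x / dualN N (f' i x) ^ 2) • f' i x))
          (u - (σ * f i x / dualN N (f' i x) ^ 2) • f' i x) :=
        ⟨fun h => absurd h (not_or.mpr ⟨hc0, ha0⟩),
          fun _ => ⟨σ * f i x / dualN N (f' i x) ^ 2, fun h => absurd h hH,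
            fun _ => rfl, rfl, rfl⟩⟩
      obtain ⟨-, hueq⟩ := Hfix i _ _ hstep
      have ht0 : σ * f i x / dualN N (f' i x) ^ 2 = 0 := by
        rcases smul_eq_zero.mp (sub_eq_self.mp hueq) with h | h
        · exact h
        · exact absurd h ha0
      rcases div_eq_zero_iff.mp ht0 with h | h
      · rcases mul_eq_zero.mp h with h' | h'
        · exact absurd h' hσ.ne'
        · exact hc0 h'
      · have h2 : dualN N (f' i x) = 0 :=
          pow_eq_zero_iff (n := 2) (by norm_num) |>.mp h
        linarith [nbk_dualN_pos hN ha0]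
  · intro hz i x' u' hstep
    exact hstep.1 (hz i)
end

section
/- Under the standing assumptions, consider one NBK step at (x_k, x_k*) with index i_k and suppose f_{i_k}(x_k) ≠ 0 and ∇f_{i_k}(x_k) ≠ 0. Then the step size t_k used by the method satisfies sign(t_k) = sign(f_{i_k}(x_k)); i.e., this holds both for the relaxed step size t_{k,σ} = σ f_{i_k}(x_k)/‖∇f_{i_k}(x_k)‖_*² and, when H_k ∩ dom ∂φ ≠ ∅, for any minimizer t_{k,φ} of t ↦ φ*(x_k* − t∇f_{i_k}(x_k)) + tβ_k with β_k = ⟨∇f_{i_k}(x_k), x_k⟩ − f_{i_k}(x_k). -/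
open Set Filter Topology MeasureTheory ProbabilityTheory

section Aux
open Set Filter Topology

lemma myN_nonneg {d : ℕ} {N : Euc d → ℝ} (hN : IsANorm N) (x : Euc d) : 0 ≤ N x := by
  have h0 : N 0 = 0 := (hN.1 0).2 rfl
  have hx : N (-x) = N x := by
    have := hN.2.1 (-1) x; simpa using this
  have hsum := hN.2.2 x (-x)
  have e : x + -x = (0:Euc d) := by abel
  rw [e, h0] at hsum
  linarith

lemma myN_lip {d : ℕ} {N : Euc d → ℝ} (hN : IsANorm N) :
    ∃ L : ℝ, 0 ≤ L ∧ ∀ x : Euc d, N x ≤ L * ‖x‖ := by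
  classical
  refine ⟨∑ j : Fin d, N (EuclideanSpace.single j 1), ?_, ?_⟩
  · exact Finset.sum_nonneg fun j _ => myN_nonneg hN _
  · intro x
    have hrepr : x = ∑ j : Fin d, x j • EuclideanSpace.single j (1:ℝ) := by
      ext k
      rw [WithLp.ofLp_sum, Finset.sum_apply]
      simp [EuclideanSpace.single_apply]
    calc N x = N (∑ j : Fin d, x j • EuclideanSpace.single j (1:ℝ)) := by rw [← hrepr]
    _ ≤ ∑ j : Fin d, N (x j • EuclideanSpace.single j (1:ℝ)) :=
        Finset.le_sum_of_subadditive N ((hN.1 0).2 rfl).le hN.2.2 _ _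
    _ = ∑ j : Fin d, |x j| * N (EuclideanSpace.single j (1:ℝ)) := by
        simp [hN.2.1]
    _ ≤ ∑ j : Fin d, ‖x‖ * N (EuclideanSpace.single j (1:ℝ)) := by
        refine Finset.sum_le_sum fun j _ => ?_
        have h1 : |x j| ≤ ‖x‖ := by
          have := abs_real_inner_le_norm (EuclideanSpace.single j (1:ℝ)) x
          simpa [EuclideanSpace.inner_single_left] using this
        exact mul_le_mul_of_nonneg_right h1 (myN_nonneg hN _)
    _ = _ := by rw [← Finset.mul_sum]; ring

lemma myN_cont {d : ℕ} {N : Euc d → ℝ} (hN : IsANorm N) : Continuous N := by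
  obtain ⟨L, hL0, hL⟩ := myN_lip hN
  have key : ∀ x y : Euc d, |N x - N y| ≤ L * ‖x - y‖ := by
    intro x y
    have h1 : N x ≤ N y + N (x - y) := by
      have := hN.2.2 (x - y) y; simpa [sub_add_cancel] using this.trans_eq (by ring)
    have h2 : N y ≤ N x + N (y - x) := by
      have := hN.2.2 (y - x) x; simpa [sub_add_cancel] using this.trans_eq (by ring)
    have hyx : N (y - x) = N (x - y) := by
      have := hN.2.1 (-1) (x - y); simpa [neg_sub] using this
    have := hL (x - y)
    rw [abs_sub_le_iff]; constructor <;> nlinarith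
  have : LipschitzWith (Real.toNNReal L) N := by
    refine LipschitzWith.of_dist_le_mul fun x y => ?_
    have := key x y
    rw [Real.dist_eq, dist_eq_norm]
    calc |N x - N y| ≤ L * ‖x - y‖ := this
    _ ≤ Real.toNNReal L * ‖x - y‖ :=
        mul_le_mul_of_nonneg_right (Real.le_coe_toNNReal L) (norm_nonneg _)
  exact this.continuous

/-- Lower bound: c‖x‖ ≤ N x with c > 0, assuming d ≥ 1. -/
lemma myN_lower {d : ℕ} (hd : 0 < d) {N : Euc d → ℝ} (hN : IsANorm N) :
    ∃ c : ℝ, 0 < c ∧ ∀ x : Euc d, c * ‖x‖ ≤ N x := by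
  have hne : (Metric.sphere (0:Euc d) 1).Nonempty := by
    have : Nontrivial (Euc d) := by
      refine ⟨⟨0, EuclideanSpace.single ⟨0, hd⟩ 1, ?_⟩⟩
      intro h
      have := congrArg (fun v : Euc d => v ⟨0, hd⟩) h.symm
      simp [EuclideanSpace.single_apply] at this
    exact NormedSpace.sphere_nonempty.2 zero_le_one
  obtain ⟨z, hz, hzmin⟩ := (isCompact_sphere (0:Euc d) 1).exists_isMinOn hne
    ((myN_cont hN).continuousOn)
  have hz1 : ‖z‖ = 1 := by simpa using mem_sphere_zero_iff_norm.1 hz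
  have hzne : z ≠ 0 := by intro h; rw [h] at hz1; simp at hz1
  have hc : 0 < N z := lt_of_le_of_ne (myN_nonneg hN z) (fun h => hzne ((hN.1 z).1 h.symm))
  refine ⟨N z, hc, fun x => ?_⟩
  rcases eq_or_ne x 0 with rfl | hx
  · simp [(hN.1 0).2 rfl]
  · have hnx : (0:ℝ) < ‖x‖ := norm_pos_iff.2 hx
    have hmem : (‖x‖⁻¹ • x) ∈ Metric.sphere (0:Euc d) 1 := by
      simp [norm_smul, abs_of_pos (inv_pos.2 hnx), inv_mul_cancel₀ hnx.ne']
    have h2 : N z ≤ N (‖x‖⁻¹ • x) := hzmin hmem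
    have hN' : N (‖x‖⁻¹ • x) = ‖x‖⁻¹ * N x := by
      rw [hN.2.1]; rw [abs_of_pos (inv_pos.2 hnx)]
    rw [hN'] at h2
    have this := h2
    calc N z * ‖x‖ ≤ (‖x‖⁻¹ * N x) * ‖x‖ := mul_le_mul_of_nonneg_right this (norm_nonneg _)
    _ = N x := by field_simp

lemma dualN_pos {d : ℕ} {N : Euc d → ℝ} (hN : IsANorm N) {u : Euc d} (hu : u ≠ 0) :
    0 < dualN N u := by
  have hd : 0 < d := by
    by_contra h
    push_neg at h
    interval_cases d
    · exact hu (Subsingleton.elim _ _)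
  obtain ⟨c, hc, hlow⟩ := myN_lower hd hN
  have hbdd : BddAbove {r : ℝ | ∃ y : Euc d, N y ≤ 1 ∧ r = (rinn u y)} := by
    refine ⟨‖u‖ * c⁻¹, fun r hr => ?_⟩
    obtain ⟨y, hy1, rfl⟩ := hr
    have hy2 : ‖y‖ ≤ c⁻¹ := by
      nlinarith [hlow y, hy1, inv_pos.2 hc, mul_inv_cancel₀ hc.ne']
    calc rinn u y ≤ ‖u‖ * ‖y‖ := real_inner_le_norm u y
    _ ≤ ‖u‖ * c⁻¹ := mul_le_mul_of_nonneg_left hy2 (norm_nonneg _)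
  have hNu : 0 < N u := lt_of_le_of_ne (myN_nonneg hN u) (fun h => hu ((hN.1 u).1 h.symm))
  have hmem : ‖u‖^2 / N u ∈ {r : ℝ | ∃ y : Euc d, N y ≤ 1 ∧ r = (rinn u y)} := by
    refine ⟨(N u)⁻¹ • u, ?_, ?_⟩
    · rw [hN.2.1, abs_of_pos (inv_pos.2 hNu), inv_mul_cancel₀ hNu.ne']
    · rw [show rinn u ((N u)⁻¹ • u) = (N u)⁻¹ * (inner ℝ u u : ℝ) from real_inner_smul_right u u _]
      rw [real_inner_self_eq_norm_sq]; field_simp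
  have : ‖u‖^2 / N u ≤ dualN N u := le_csSup hbdd hmem
  have hpos : 0 < ‖u‖^2 / N u := by
    have : (0:ℝ) < ‖u‖ := norm_pos_iff.2 hu
    positivity
  linarith

variable {d : ℕ} {φ : Euc d → EReal} {C : Set (Euc d)}

lemma ereal_real {w : EReal} (h1 : w ≠ ⊤) (h2 : w ≠ ⊥) : ∃ r : ℝ, w = (r : EReal) :=
  ⟨w.toReal, (EReal.coe_toReal h1 h2).symm⟩

/-- subdiff at a point gives a real value of φ there. -/
lemma subdiff_real (hφ : PhiAssump φ C) {x u : Euc d} (hu : u ∈ subdiff φ x) :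
    ∃ ρ : ℝ, φ x = (ρ : EReal) := ereal_real hu.1 (hφ.proper.2 x)

/-- ddom is nonempty. -/
lemma ddom_ne (hφ : PhiAssump φ C) : (ddom φ).Nonempty := by
  by_contra h
  rw [Set.not_nonempty_iff_eq_empty] at h
  have := hφ.domC
  rw [h, closure_empty] at this
  exact hφ.Cne.ne_empty this.symm

/-- econj is never ⊥. -/
lemma econj_ne_bot (hφ : PhiAssump φ C) (v : Euc d) : econj φ v ≠ ⊥ := by
  obtain ⟨x₀, hx₀⟩ := hφ.proper.1
  obtain ⟨r, hr⟩ := ereal_real hx₀ (hφ.proper.2 x₀)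
  have hle : ((rinn v x₀ - r : ℝ) : EReal) ≤ econj φ v := by
    have : ((rinn v x₀ : ℝ) : EReal) - φ x₀ = ((rinn v x₀ - r : ℝ) : EReal) := by
      rw [hr, ← EReal.coe_sub]
    exact this ▸ le_iSup (fun y => ((rinn v y : ℝ) : EReal) - φ y) x₀
  intro h
  rw [h, le_bot_iff] at hle
  exact EReal.coe_ne_bot _ hle

/-- econj is never ⊤. -/
lemma econj_ne_top (hφ : PhiAssump φ C) (v : Euc d) : econj φ v ≠ ⊤ := by
  obtain ⟨R, hR⟩ := hφ.coercive (‖v‖ + 1)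
  -- affine lower bound on φ from a subgradient point
  obtain ⟨x₁, u₁, hu₁⟩ := ddom_ne hφ
  obtain ⟨ρ₁, hρ₁⟩ := subdiff_real hφ hu₁
  set R₀ : ℝ := max R 0 with hR₀
  set K : ℝ := ‖v‖ * R₀ + |ρ₁| + ‖u₁‖ * (R₀ + ‖x₁‖) with hK
  have hbound : ∀ y : Euc d, ((rinn v y : ℝ) : EReal) - φ y ≤ ((max 0 K : ℝ) : EReal) := by
    intro y
    rcases eq_or_ne (φ y) ⊤ with hy | hy
    · rw [hy]
      simp [EReal.sub_top]
    obtain ⟨ρ, hρ⟩ := ereal_real hy (hφ.proper.2 y)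
    rw [hρ, ← EReal.coe_sub, EReal.coe_le_coe_iff]
    rcases le_or_gt R ‖y‖ with hcase | hcase
    · -- large y : supercoercivity
      have h1 := hR y hcase
      rw [hρ, EReal.coe_le_coe_iff] at h1
      have h2 : rinn v y ≤ ‖v‖ * ‖y‖ := (real_inner_le_norm v y)
      have : rinn v y - ρ ≤ -‖y‖ := by nlinarith
      have h3 : (0:ℝ) ≤ ‖y‖ := norm_nonneg _
      have := le_max_left (0:ℝ) K
      linarith
    · -- small y : affine lower bound
      have hsub := hu₁.2 y
      rw [hρ₁, hρ] at hsub
      rw [← EReal.coe_add, EReal.coe_le_coe_iff] at hsub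
      have h2 : rinn v y ≤ ‖v‖ * ‖y‖ := real_inner_le_norm v y
      have h3 : |rinn u₁ (y - x₁)| ≤ ‖u₁‖ * ‖y - x₁‖ := abs_real_inner_le_norm u₁ (y - x₁)
      have h4 : ‖y - x₁‖ ≤ ‖y‖ + ‖x₁‖ := norm_sub_le y x₁
      have h5 : ‖y‖ ≤ R₀ := le_trans hcase.le (le_max_left _ _)
      have h6 : (0:ℝ) ≤ ‖y‖ := norm_nonneg _
      have h7 : (0:ℝ) ≤ ‖u₁‖ := norm_nonneg _
      have h8 : (0:ℝ) ≤ ‖v‖ := norm_nonneg _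
      have h9 : ρ₁ ≥ -|ρ₁| := neg_abs_le ρ₁
      have := le_max_right (0:ℝ) K
      rw [abs_le] at h3
      nlinarith [abs_nonneg ρ₁, norm_nonneg x₁]
  intro h
  have := iSup_le hbound
  rw [show (⨆ x : Euc d, ((rinn v x : ℝ) : EReal) - φ x) = econj φ v from rfl, h] at this
  exact (EReal.coe_ne_top _) (top_le_iff.1 this)

lemma econj_real (hφ : PhiAssump φ C) (v : Euc d) : econj φ v = ((rconj φ v : ℝ) : EReal) :=
  (EReal.coe_toReal (econj_ne_top hφ v) (econj_ne_bot hφ v)).symm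

/-- Fenchel–Young. -/
lemma fenchel_young (hφ : PhiAssump φ C) {v y : Euc d} {ρ : ℝ} (hy : φ y = (ρ : EReal)) :
    rinn v y - ρ ≤ rconj φ v := by
  have h : ((rinn v y : ℝ) : EReal) - φ y ≤ econj φ v :=
    le_iSup (fun z => ((rinn v z : ℝ) : EReal) - φ z) y
  rw [hy, ← EReal.coe_sub, econj_real hφ v, EReal.coe_le_coe_iff] at h
  exact h

/-- Fenchel equality at a subgradient. -/
lemma fenchel_eq (hφ : PhiAssump φ C) {x u : Euc d} (hu : u ∈ subdiff φ x) {ρ : ℝ}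
    (hx : φ x = (ρ : EReal)) : rconj φ u = rinn u x - ρ := by
  refine le_antisymm ?_ (fenchel_young hφ hx)
  have h : econj φ u ≤ ((rinn u x - ρ : ℝ) : EReal) := by
    refine iSup_le fun y => ?_
    rcases eq_or_ne (φ y) ⊤ with hy | hy
    · rw [hy]; simp [EReal.sub_top]
    obtain ⟨ρ', hρ'⟩ := ereal_real hy (hφ.proper.2 y)
    have hsub := hu.2 y
    rw [hx, hρ', ← EReal.coe_add, EReal.coe_le_coe_iff] at hsub
    rw [hρ', ← EReal.coe_sub, EReal.coe_le_coe_iff]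
    have : rinn u (y - x) = rinn u y - rinn u x := by
      simp only [rinn, inner_sub_right]
    linarith [hsub, this ▸ hsub]
  rw [econj_real hφ u, EReal.coe_le_coe_iff] at h
  exact h

/-- Uniqueness of the point with a given subgradient (essential strict convexity). -/
lemma subgrad_unique (hφ : PhiAssump φ C) {x z u : Euc d}
    (hx : u ∈ subdiff φ x) (hz : u ∈ subdiff φ z) : x = z := by
  by_contra hne
  obtain ⟨ρx, hρx⟩ := subdiff_real hφ hx
  obtain ⟨ρz, hρz⟩ := subdiff_real hφ hz
  have hxd : x ∈ intrinsicInterior ℝ (edom φ) := hφ.ri_eq ▸ ⟨u, hx⟩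
  have hzd : z ∈ intrinsicInterior ℝ (edom φ) := hφ.ri_eq ▸ ⟨u, hz⟩
  have hstrict := hφ.essstrict x hxd z hzd hne (1/2) (by norm_num) (by norm_num)
  set m : Euc d := (1/2 : ℝ) • x + (1 - 1/2 : ℝ) • z with hm
  have hrhs : ((1/2 : ℝ) : EReal) * φ x + ((1 - 1/2 : ℝ) : EReal) * φ z
      = (((1/2) * ρx + (1/2) * ρz : ℝ) : EReal) := by
    rw [hρx, hρz, ← EReal.coe_mul, ← EReal.coe_mul, ← EReal.coe_add]
    norm_num
  rw [hrhs] at hstrict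
  have hmtop : φ m ≠ ⊤ := by
    intro h; rw [h] at hstrict; exact (not_top_lt hstrict)
  obtain ⟨ρm, hρm⟩ := ereal_real hmtop (hφ.proper.2 m)
  rw [hρm, EReal.coe_lt_coe_iff] at hstrict
  have h1 := hx.2 m
  have h2 := hz.2 m
  rw [hρx, hρm, ← EReal.coe_add, EReal.coe_le_coe_iff] at h1
  rw [hρz, hρm, ← EReal.coe_add, EReal.coe_le_coe_iff] at h2
  have e1 : rinn u (m - x) = (1/2) * rinn u (z - x) := by
    have : m - x = (1/2 : ℝ) • (z - x) := by
      rw [hm]; module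
    rw [this, rinn, real_inner_smul_right]; rfl
  have e2 : rinn u (m - z) = -((1/2) * rinn u (z - x)) := by
    have : m - z = (-(1/2) : ℝ) • (z - x) := by
      rw [hm]; module
    rw [this, rinn, real_inner_smul_right]
    simp [rinn]
  rw [e1] at h1; rw [e2] at h2
  linarith

/-- The supremum in the conjugate is attained. -/
lemma econj_attain (hφ : PhiAssump φ C) (v : Euc d) :
    ∃ (y : Euc d) (ρ : ℝ), φ y = (ρ : EReal) ∧ v ∈ subdiff φ y ∧
      rconj φ v = rinn v y - ρ := by
  classical
  set c : ℝ := rconj φ v with hc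
  -- approximate maximizers
  have hseq : ∀ n : ℕ, ∃ y : Euc d, ((c - 1/(n+1) : ℝ) : EReal) < ((rinn v y : ℝ) : EReal) - φ y := by
    intro n
    have hlt : ((c - 1/(n+1) : ℝ) : EReal) < econj φ v := by
      rw [econj_real hφ v, EReal.coe_lt_coe_iff]
      have : (0:ℝ) < 1/(n+1) := by positivity
      linarith
    exact lt_iSup_iff.1 hlt
  choose Y hY using hseq
  have hYreal : ∀ n : ℕ, φ (Y n) = (((φ (Y n)).toReal : ℝ) : EReal) := by
    intro n
    refine (EReal.coe_toReal ?_ (hφ.proper.2 _)).symm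
    intro h
    have := hY n
    rw [h, EReal.sub_top] at this
    exact not_lt_bot this
  set ρn : ℕ → ℝ := fun n => (φ (Y n)).toReal with hρn
  have hterm : ∀ n : ℕ, c - 1/(n+1) < rinn v (Y n) - ρn n := by
    intro n
    have := hY n
    rw [hYreal n, ← EReal.coe_sub, EReal.coe_lt_coe_iff] at this
    exact this
  -- uniform bound
  obtain ⟨R, hR⟩ := hφ.coercive (‖v‖ + 1)
  set B : ℝ := max R (|c| + 1) with hB
  have hbd : ∀ n : ℕ, Y n ∈ Metric.closedBall (0 : Euc d) B := by
    intro n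
    rw [Metric.mem_closedBall, dist_zero_right]
    by_contra hgt
    push_neg at hgt
    have hRle : R ≤ ‖Y n‖ := le_trans (le_max_left _ _) hgt.le
    have h1 := hR (Y n) hRle
    rw [hYreal n, EReal.coe_le_coe_iff] at h1
    have h2 : rinn v (Y n) ≤ ‖v‖ * ‖Y n‖ := real_inner_le_norm _ _
    have h3 : |c| + 1 < ‖Y n‖ := lt_of_le_of_lt (le_max_right _ _) hgt
    have h4 : (0:ℝ) < 1/(n+1) := by positivity
    have h5 : 1/(n+1) ≤ (1:ℝ) := by
      rw [div_le_one (by positivity)]; linarith [Nat.cast_nonneg (α := ℝ) n]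
    have h6 := hterm n
    nlinarith [abs_nonneg c, neg_abs_le c, norm_nonneg (Y n)]
  obtain ⟨y₀, hy₀mem, ψ, hψ, htend⟩ :=
    (isCompact_closedBall (0 : Euc d) B).tendsto_subseq hbd
  -- φ y₀ ≤ ⟨v,y₀⟩ - c
  have hlim : φ y₀ ≤ ((rinn v y₀ - c : ℝ) : EReal) := by
    rw [← EReal.ge_of_forall_gt_iff_ge]
    intro z hz
    rw [EReal.coe_le_coe_iff]
    have hev : ∀ᶠ w in 𝓝 y₀, (z : EReal) < φ w := hφ.lsc y₀ z hz
    have hev2 : ∀ᶠ k in atTop, (z : EReal) < φ (Y (ψ k)) := htend.eventually hev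
    have hev3 : ∀ᶠ k in atTop, z < rinn v (Y (ψ k)) - c + 1/(ψ k + 1) := by
      filter_upwards [hev2] with k hk
      rw [hYreal (ψ k), EReal.coe_lt_coe_iff] at hk
      have := hterm (ψ k)
      linarith
    have htendg : Tendsto (fun k => rinn v (Y (ψ k)) - c + 1/(ψ k + 1))
        atTop (𝓝 (rinn v y₀ - c + 0)) := by
      refine Tendsto.add (Tendsto.sub ?_ tendsto_const_nhds) ?_
      · exact (tendsto_const_nhds.inner htend)
      · exact tendsto_one_div_add_atTop_nhds_zero_nat.comp hψ.tendsto_atTop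
    have := ge_of_tendsto htendg (hev3.mono fun k hk => hk.le)
    linarith [this]
  have hy₀top : φ y₀ ≠ ⊤ := by
    intro h; rw [h] at hlim; exact (EReal.coe_ne_top _) (top_le_iff.1 hlim)
  obtain ⟨ρ₀, hρ₀⟩ := ereal_real hy₀top (hφ.proper.2 y₀)
  have hρ₀le : ρ₀ ≤ rinn v y₀ - c := by
    rw [hρ₀, EReal.coe_le_coe_iff] at hlim; exact hlim
  have hfy := fenchel_young hφ hρ₀ (v := v)
  have heq : rconj φ v = rinn v y₀ - ρ₀ := by rw [← hc] at hfy ⊢; linarith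
  refine ⟨y₀, ρ₀, hρ₀, ⟨hy₀top, fun y => ?_⟩, heq⟩
  rcases eq_or_ne (φ y) ⊤ with hy | hy
  · rw [hy]; exact le_top
  obtain ⟨ρ', hρ'⟩ := ereal_real hy (hφ.proper.2 y)
  have hfy' := fenchel_young hφ hρ' (v := v)
  rw [hρ₀, hρ', ← EReal.coe_add, EReal.coe_le_coe_iff]
  have hsplit : rinn v (y - y₀) = rinn v y - rinn v y₀ := by
    simp only [rinn, inner_sub_right]
  rw [← hc] at hfy'
  linarith [hsplit ▸ le_refl (rinn v (y - y₀))]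

/-- KEY: if 0 minimizes the line objective from the right then ⟨a,x⟩ ≤ β. -/
lemma key_lemma (hφ : PhiAssump φ C) {x u : Euc d} (hu : u ∈ subdiff φ x) (a : Euc d) (β : ℝ)
    (hmin : ∀ s : ℝ, 0 < s → s ≤ 1 → rconj φ u ≤ rconj φ (u - s • a) + s * β) :
    rinn a x ≤ β := by
  classical
  obtain ⟨ρx, hρx⟩ := subdiff_real hφ hu
  set v : ℕ → Euc d := fun n => u - (1/(n+1) : ℝ) • a with hv
  have hattain := fun n => econj_attain hφ (v n)
  choose Y ρn hρ hsub heq using hattain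
  have hs0 : ∀ n : ℕ, (0:ℝ) < 1/(n+1) := fun n => by positivity
  have hs1 : ∀ n : ℕ, (1/(n+1) : ℝ) ≤ 1 := fun n => by
    rw [div_le_one (by positivity)]; linarith [Nat.cast_nonneg (α := ℝ) n]
  -- step inequality : ⟨a, Y n⟩ ≤ β
  have hstep : ∀ n : ℕ, rinn a (Y n) ≤ β := by
    intro n
    have h1 := hmin (1/(n+1)) (hs0 n) (hs1 n)
    rw [heq n] at h1
    have h2 : rinn (v n) (Y n) = rinn u (Y n) - (1/(n+1)) * rinn a (Y n) := by
      simp only [hv, rinn, inner_sub_left, real_inner_smul_left]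
    have h3 := fenchel_young hφ (hρ n) (v := u)
    rw [h2] at h1
    nlinarith [hs0 n]
  -- uniform bound
  obtain ⟨R, hR⟩ := hφ.coercive (‖u‖ + ‖a‖ + 1)
  have hvn : ∀ n : ℕ, ‖v n‖ ≤ ‖u‖ + ‖a‖ := by
    intro n
    calc ‖v n‖ ≤ ‖u‖ + ‖(1/(n+1) : ℝ) • a‖ := norm_sub_le _ _
    _ ≤ ‖u‖ + ‖a‖ := by
        rw [norm_smul, Real.norm_eq_abs, abs_of_pos (hs0 n)]
        nlinarith [hs1 n, hs0 n, norm_nonneg a]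
  set c₀ : ℝ := -((‖u‖ + ‖a‖) * ‖x‖) - |ρx| with hc₀
  have hlow : ∀ n : ℕ, c₀ ≤ rconj φ (v n) := by
    intro n
    have h1 := fenchel_young hφ hρx (v := v n)
    have h2 : |rinn (v n) x| ≤ ‖v n‖ * ‖x‖ := abs_real_inner_le_norm _ _
    have h3 := hvn n
    rw [abs_le] at h2
    nlinarith [le_abs_self ρx, mul_le_mul_of_nonneg_right h3 (norm_nonneg x), h2.1]
  set B : ℝ := max R (-c₀ + 1) with hB
  have hbd : ∀ n : ℕ, Y n ∈ Metric.closedBall (0 : Euc d) B := by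
    intro n
    rw [Metric.mem_closedBall, dist_zero_right]
    by_contra hgt
    push_neg at hgt
    have hRle : R ≤ ‖Y n‖ := le_trans (le_max_left _ _) hgt.le
    have h1 := hR (Y n) hRle
    rw [hρ n, EReal.coe_le_coe_iff] at h1
    have h2 : rinn (v n) (Y n) ≤ ‖v n‖ * ‖Y n‖ := real_inner_le_norm _ _
    have h3 := hvn n
    have h4 := hlow n
    rw [heq n] at h4
    have h5 : -c₀ + 1 < ‖Y n‖ := lt_of_le_of_lt (le_max_right _ _) hgt
    nlinarith [norm_nonneg (Y n)]
  obtain ⟨y₀, hy₀mem, ψ, hψ, htend⟩ :=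
    (isCompact_closedBall (0 : Euc d) B).tendsto_subseq hbd
  have hvtend : Tendsto (fun k => v (ψ k)) atTop (𝓝 u) := by
    have h0 : Tendsto (fun k => (1/(ψ k + 1) : ℝ)) atTop (𝓝 0) :=
      tendsto_one_div_add_atTop_nhds_zero_nat.comp hψ.tendsto_atTop
    have : Tendsto (fun k => u - (1/(ψ k + 1) : ℝ) • a) atTop (𝓝 (u - (0:ℝ) • a)) :=
      tendsto_const_nhds.sub (h0.smul tendsto_const_nhds)
    simpa only [hv, one_div, zero_smul, sub_zero] using this
  -- the limit point has u as subgradient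
  have hkey : ∀ (y : Euc d) (ρ' : ℝ), φ y = (ρ' : EReal) →
      φ y₀ ≤ ((ρ' - rinn u (y - y₀) : ℝ) : EReal) := by
    intro y ρ' hρ'
    rw [← EReal.ge_of_forall_gt_iff_ge]
    intro z hz
    rw [EReal.coe_le_coe_iff]
    have hev : ∀ᶠ w in 𝓝 y₀, (z : EReal) < φ w := hφ.lsc y₀ z hz
    have hev2 : ∀ᶠ k in atTop, (z : EReal) < φ (Y (ψ k)) := htend.eventually hev
    have hev3 : ∀ᶠ k in atTop, z < ρ' - rinn (v (ψ k)) (y - Y (ψ k)) := by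
      filter_upwards [hev2] with k hk
      rw [hρ (ψ k), EReal.coe_lt_coe_iff] at hk
      have hsg := (hsub (ψ k)).2 y
      rw [hρ (ψ k), hρ', ← EReal.coe_add, EReal.coe_le_coe_iff] at hsg
      linarith
    have htendg : Tendsto (fun k => ρ' - rinn (v (ψ k)) (y - Y (ψ k)))
        atTop (𝓝 (ρ' - rinn u (y - y₀))) := by
      refine tendsto_const_nhds.sub ?_
      exact hvtend.inner (tendsto_const_nhds.sub htend)
    exact ge_of_tendsto htendg (hev3.mono fun k hk => hk.le)
  have hy₀top : φ y₀ ≠ ⊤ := by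
    intro h
    have := hkey x ρx hρx
    rw [h] at this
    exact (EReal.coe_ne_top _) (top_le_iff.1 this)
  obtain ⟨ρ₀, hρ₀⟩ := ereal_real hy₀top (hφ.proper.2 y₀)
  have hmem : u ∈ subdiff φ y₀ := by
    refine ⟨hy₀top, fun y => ?_⟩
    rcases eq_or_ne (φ y) ⊤ with hy | hy
    · rw [hy]; exact le_top
    obtain ⟨ρ', hρ'⟩ := ereal_real hy (hφ.proper.2 y)
    have h2 := hkey y ρ' hρ'
    rw [hρ₀, EReal.coe_le_coe_iff] at h2
    rw [hρ₀, hρ', ← EReal.coe_add, EReal.coe_le_coe_iff]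
    linarith
  have hxy : y₀ = x := subgrad_unique hφ hmem hu
  have htendinner : Tendsto (fun k => rinn a (Y (ψ k))) atTop (𝓝 (rinn a x)) := by
    rw [← hxy]
    exact tendsto_const_nhds.inner htend
  exact le_of_tendsto htendinner (Eventually.of_forall fun k => hstep (ψ k))

end Aux

/-- sign of the NBK step size equals the sign of `f_{i_k}(x_k)`. -/
theorem statement2 {d n : ℕ} (φ : Euc d → EReal) (C Dset : Set (Euc d))
    (f : Fin n → Euc d → ℝ) (f' : Fin n → Euc d → Euc d)
    (hφ : PhiAssump φ C) (hf : FAssump f f' Dset C) (hS : (solSet f C).Nonempty)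
    (σ : ℝ) (hσ : 0 < σ) (N : Euc d → ℝ) (hN : IsANorm N)
    (x u : Euc d) (hu : u ∈ subdiff φ x) (hxg : x = gradconj φ u)
    (i : Fin n) (hf0 : f i x ≠ 0) (hf'0 : f' i x ≠ 0) :
    Real.sign (σ * f i x / (dualN N (f' i x)) ^ 2) = Real.sign (f i x) ∧
    ((linHyp f f' i x ∩ ddom φ).Nonempty →
      ∀ t : ℝ, (∀ s : ℝ, lineObj φ f f' i x u t ≤ lineObj φ f f' i x u s) →
        Real.sign t = Real.sign (f i x)) := by
  constructor
  · -- relaxed step size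
    have hD : 0 < dualN N (f' i x) := dualN_pos hN hf'0
    have hD2 : 0 < (dualN N (f' i x)) ^ 2 := pow_pos hD 2
    rcases lt_or_gt_of_ne hf0 with hneg | hpos
    · rw [Real.sign_of_neg hneg,
        Real.sign_of_neg (div_neg_of_neg_of_pos (mul_neg_of_pos_of_neg hσ hneg) hD2)]
    · rw [Real.sign_of_pos hpos, Real.sign_of_pos (div_pos (mul_pos hσ hpos) hD2)]
  · intro _ t hmint
    obtain ⟨ρx, hρx⟩ := subdiff_real hφ hu
    have hline0 : lineObj φ f f' i x u 0 = rconj φ u := by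
      simp [lineObj]
    have hlow : ∀ s : ℝ, rconj φ u - s * f i x ≤ lineObj φ f f' i x u s := by
      intro s
      have h1 := fenchel_young hφ hρx (v := u - s • f' i x)
      have h2 : rinn (u - s • f' i x) x = rinn u x - s * rinn (f' i x) x := by
        simp only [rinn, inner_sub_left, real_inner_smul_left]
      have h3 := fenchel_eq hφ hu hρx
      simp only [lineObj]
      linarith
    rcases lt_or_gt_of_ne hf0 with hneg | hpos
    · -- f i x < 0 : t < 0
      have ht : t < 0 := by
        rcases lt_trichotomy t 0 with h | h | h
        · exact h
        · exfalso
          subst h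
          have hm : ∀ s : ℝ, 0 < s → s ≤ 1 →
              rconj φ u ≤ rconj φ (u - s • (-(f' i x))) + s * (-(rinn (f' i x) x - f i x)) := by
            intro s hs _
            have h0 := hmint (-s)
            rw [hline0] at h0
            have he : u - (-s) • f' i x = u - s • (-(f' i x)) := by
              rw [neg_smul, smul_neg]
            simp only [lineObj] at h0
            rw [he] at h0
            linarith
          have hk := key_lemma hφ hu (-(f' i x)) (-(rinn (f' i x) x - f i x)) hm
          have : rinn (-(f' i x)) x = -(rinn (f' i x) x) := by
            simp [rinn, inner_neg_left]
          rw [this] at hk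
          linarith
        · exfalso
          have h0 := hmint 0
          rw [hline0] at h0
          have h1 := hlow t
          nlinarith
      rw [Real.sign_of_neg ht, Real.sign_of_neg hneg]
    · -- f i x > 0 : t > 0
      have ht : 0 < t := by
        rcases lt_trichotomy t 0 with h | h | h
        · exfalso
          have h0 := hmint 0
          rw [hline0] at h0
          have h1 := hlow t
          nlinarith
        · exfalso
          subst h
          have hm : ∀ s : ℝ, 0 < s → s ≤ 1 →
              rconj φ u ≤ rconj φ (u - s • f' i x) + s * (rinn (f' i x) x - f i x) := by
            intro s hs _
            have h0 := hmint s
            rw [hline0] at h0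
            simp only [lineObj] at h0
            linarith
          have hk := key_lemma hφ hu (f' i x) (rinn (f' i x) x - f i x) hm
          linarith
        · exact h
      rw [Real.sign_of_pos ht, Real.sign_of_pos hpos]
end

section
/- Under the standing assumptions and Assumption 2, let (x_{k+1}, x_{k+1}*) be obtained from (x_k, x_k*) by one NBK step with index i_k (with f_{i_k}(x_k) ≠ 0 and ∇f_{i_k}(x_k) ≠ 0). Then for every solution x̂ ∈ S = C ∩ f^{-1}(0) it holds that D_φ^{x_{k+1}*}(x_{k+1}, x̂) ≤ D_φ^{x_k*}(x_k, x̂) − D_φ^{x_k*}(x_k, x_{k+1}). -/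
open Set Filter Topology MeasureTheory ProbabilityTheory

section Aux

open InnerProductSpace

variable {d : ℕ}

/-- `y` is a maximizer (with finite value, `φ y = r`) of `w ↦ ⟨v,w⟩ - φ w`. -/
def MaxAt (φ : Euc d → EReal) (v y : Euc d) (r : ℝ) : Prop :=
  φ y = (r : EReal) ∧
    ∀ w : Euc d, ((rinn v w : ℝ) : EReal) - φ w ≤ ((rinn v y - r : ℝ) : EReal)

lemma rinn_eq (x y : Euc d) : rinn x y = inner ℝ x y := rfl

lemma rinn_sub_right (v a b : Euc d) : rinn v (a - b) = rinn v a - rinn v b := by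
  simp [rinn_eq, inner_sub_right]

lemma econj_eq_of_maxAt {φ : Euc d → EReal} {v y : Euc d} {r : ℝ}
    (h : MaxAt φ v y r) : econj φ v = ((rinn v y - r : ℝ) : EReal) := by
  refine le_antisymm (iSup_le h.2) ?_
  have := le_iSup (fun w => ((rinn v w : ℝ) : EReal) - φ w) y
  rwa [h.1, ← EReal.coe_sub] at this

lemma rconj_eq_of_maxAt {φ : Euc d → EReal} {v y : Euc d} {r : ℝ}
    (h : MaxAt φ v y r) : rconj φ v = rinn v y - r := by
  rw [rconj, econj_eq_of_maxAt h, EReal.toReal_coe]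

/-- Fenchel–Young from a maximizer. -/
lemma fy_of_maxAt {φ : Euc d → EReal} {v y : Euc d} {r : ℝ}
    (h : MaxAt φ v y r) {w : Euc d} {s : ℝ} (hw : φ w = (s : EReal)) :
    rinn v w - s ≤ rconj φ v := by
  have := h.2 w
  rw [hw, ← EReal.coe_sub, EReal.coe_le_coe_iff] at this
  rw [rconj_eq_of_maxAt h]
  exact this

/-- A maximizer gives a subgradient: `v ∈ ∂φ(y)`. -/
lemma maxAt_mem_subdiff {φ : Euc d → EReal} (hp : ProperE φ) {v y : Euc d} {r : ℝ}
    (h : MaxAt φ v y r) : v ∈ subdiff φ y := by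
  refine ⟨by rw [h.1]; exact EReal.coe_ne_top r, fun w => ?_⟩
  rcases eq_or_ne (φ w) ⊤ with hw | hw
  · rw [hw]; exact le_top
  · have hw' : φ w ≠ ⊥ := hp.2 w
    lift φ w to ℝ using ⟨hw, hw'⟩ with s hs
    have h2 := h.2 w
    rw [← hs, ← EReal.coe_sub, EReal.coe_le_coe_iff] at h2
    rw [h.1, ← EReal.coe_add, EReal.coe_le_coe_iff]
    linarith [h2, rinn_sub_right v w y]

/-- A subgradient gives a maximizer. -/
lemma maxAt_of_mem_subdiff {φ : Euc d → EReal} (hp : ProperE φ) {u x : Euc d}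
    (hu : u ∈ subdiff φ x) : ∃ px : ℝ, MaxAt φ u x px := by
  have hx : φ x ≠ ⊤ := hu.1
  have hx' : φ x ≠ ⊥ := hp.2 x
  lift φ x to ℝ using ⟨hx, hx'⟩ with px hpx
  refine ⟨px, hpx.symm, fun w => ?_⟩
  rcases eq_or_ne (φ w) ⊤ with hw | hw
  · rw [hw, EReal.sub_top]; exact bot_le
  · have hw' : φ w ≠ ⊥ := hp.2 w
    lift φ w to ℝ using ⟨hw, hw'⟩ with s hs
    have h2 := hu.2 w
    rw [← hpx, ← hs, ← EReal.coe_add, EReal.coe_le_coe_iff] at h2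
    rw [← EReal.coe_sub, EReal.coe_le_coe_iff]
    linarith [h2, rinn_sub_right u w x]

end Aux
section Aux2

variable {d : ℕ}

/-- Core lower-semicontinuity limit lemma. -/
lemma core_lsc {φ : Euc d → EReal} (hlsc : LowerSemicontinuous φ)
    {v yhat : Euc d} {vk yk : ℕ → Euc d} {ck : ℕ → ℝ} {c : ℝ}
    (hv : Tendsto vk atTop (𝓝 v)) (hy : Tendsto yk atTop (𝓝 yhat))
    (hc : Tendsto ck atTop (𝓝 c))
    (hval : ∀ k, ((ck k : ℝ) : EReal) ≤ ((rinn (vk k) (yk k) : ℝ) : EReal) - φ (yk k)) :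
    ((c : ℝ) : EReal) ≤ ((rinn v yhat : ℝ) : EReal) - φ yhat := by
  set ρk : ℕ → ℝ := fun k => rinn (vk k) (yk k) - ck k with hρk
  have hinner : Tendsto (fun k => rinn (vk k) (yk k)) atTop (𝓝 (rinn v yhat)) :=
    hv.inner hy
  have hρ : Tendsto ρk atTop (𝓝 (rinn v yhat - c)) := hinner.sub hc
  have hφk : ∀ k, φ (yk k) ≤ ((ρk k : ℝ) : EReal) := by
    intro k
    have h := hval k
    rcases eq_or_ne (φ (yk k)) ⊤ with htop | htop
    · rw [htop, EReal.sub_top] at h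
      exact absurd h (by simp)
    rcases eq_or_ne (φ (yk k)) ⊥ with hbot | hbot
    · rw [hbot]; exact bot_le
    lift φ (yk k) to ℝ using ⟨htop, hbot⟩ with s hs
    rw [← EReal.coe_sub, EReal.coe_le_coe_iff] at h
    rw [EReal.coe_le_coe_iff]
    simp only [ρk]
    linarith
  have hkey : φ yhat ≤ ((rinn v yhat - c : ℝ) : EReal) := by
    by_contra hcon
    push_neg at hcon
    obtain ⟨c', hc1, hc2⟩ := EReal.exists_between_coe_real hcon
    have hev1 : ∀ᶠ k in atTop, ((c' : ℝ) : EReal) < φ (yk k) :=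
      hy.eventually (hlsc yhat (c' : EReal) hc2)
    have hev2 : ∀ᶠ k in atTop, ρk k < c' := by
      have : (rinn v yhat - c) < c' := by exact_mod_cast hc1
      exact hρ.eventually_lt_const this
    rcases (hev1.and hev2).exists with ⟨k, h1, h2⟩
    have := (hφk k).trans_lt (by exact_mod_cast h2 : ((ρk k : ℝ) : EReal) < (c' : EReal))
    exact absurd (h1.trans this).false (by simp)
  calc ((c : ℝ) : EReal) = ((rinn v yhat : ℝ) : EReal) - ((rinn v yhat - c : ℝ) : EReal) := by
        rw [← EReal.coe_sub]; norm_num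
    _ ≤ ((rinn v yhat : ℝ) : EReal) - φ yhat := EReal.sub_le_sub le_rfl hkey

end Aux2
section Aux3

variable {d : ℕ}

/-- Maximizers are unique under the standing assumptions. -/
lemma maxAt_unique {φ : Euc d → EReal} {C : Set (Euc d)} (hφ : PhiAssump φ C)
    {v y1 y2 : Euc d} {r1 r2 : ℝ} (h1 : MaxAt φ v y1 r1) (h2 : MaxAt φ v y2 r2) :
    y1 = y2 := by
  by_contra hne
  have hm1 : y1 ∈ intrinsicInterior ℝ (edom φ) := by
    rw [← hφ.ri_eq]; exact ⟨v, maxAt_mem_subdiff hφ.proper h1⟩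
  have hm2 : y2 ∈ intrinsicInterior ℝ (edom φ) := by
    rw [← hφ.ri_eq]; exact ⟨v, maxAt_mem_subdiff hφ.proper h2⟩
  have hstrict := hφ.essstrict y1 hm1 y2 hm2 hne (1/2) (by norm_num) (by norm_num)
  rw [h1.1, h2.1] at hstrict
  have hrhs : ((1/2 : ℝ) : EReal) * (r1 : EReal) + ((1 - 1/2 : ℝ) : EReal) * (r2 : EReal)
      = ((r1/2 + r2/2 : ℝ) : EReal) := by
    norm_cast
    ring
  rw [hrhs] at hstrict
  set m : Euc d := (1/2 : ℝ) • y1 + (1 - 1/2 : ℝ) • y2 with hm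
  have hmbot : φ m ≠ ⊥ := hφ.proper.2 m
  have hmtop : φ m ≠ ⊤ := ne_top_of_lt hstrict
  lift φ m to ℝ using ⟨hmtop, hmbot⟩ with rm hrm
  have hrm' : rm < r1/2 + r2/2 := by exact_mod_cast hstrict
  have hvm : rinn v m = (1/2) * rinn v y1 + (1 - 1/2) * rinn v y2 := by
    simp only [hm, rinn_eq]
    rw [inner_add_right, real_inner_smul_right, real_inner_smul_right]
  have hv1 := h1.2 m
  rw [← hrm, ← EReal.coe_sub, EReal.coe_le_coe_iff] at hv1
  have hv2 := h2.2 y1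
  rw [h1.1, ← EReal.coe_sub, EReal.coe_le_coe_iff] at hv2
  have hv3 := h1.2 y2
  rw [h2.1, ← EReal.coe_sub, EReal.coe_le_coe_iff] at hv3
  linarith

end Aux3
section Aux4

variable {d : ℕ}

lemma val_le_of_norm_ge {φ : Euc d → EReal} {v : Euc d} {M R : ℝ}
    (hM : ‖v‖ + 1 ≤ M)
    (hR : ∀ y : Euc d, R ≤ ‖y‖ → ((M * ‖y‖ : ℝ) : EReal) ≤ φ y)
    {y : Euc d} (hy : R ≤ ‖y‖) :
    ((rinn v y : ℝ) : EReal) - φ y ≤ ((-‖y‖ : ℝ) : EReal) := by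
  have h1 : ((rinn v y : ℝ) : EReal) - φ y
      ≤ ((rinn v y : ℝ) : EReal) - ((M * ‖y‖ : ℝ) : EReal) :=
    EReal.sub_le_sub le_rfl (hR y hy)
  rw [← EReal.coe_sub] at h1
  refine h1.trans ?_
  rw [EReal.coe_le_coe_iff]
  have h2 : rinn v y ≤ ‖v‖ * ‖y‖ := real_inner_le_norm v y
  nlinarith [norm_nonneg y]

/-- Attainment of the supremum defining the conjugate. -/
lemma exists_maxAt {φ : Euc d → EReal} (hp : ProperE φ) (hlsc : LowerSemicontinuous φ)
    (hsc : Supercoercive φ) (v : Euc d) : ∃ y r, MaxAt φ v y r := by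
  obtain ⟨x0, hx0⟩ := hp.1
  have hx0' : φ x0 ≠ ⊥ := hp.2 x0
  lift φ x0 to ℝ using ⟨hx0, hx0'⟩ with p0 hp0
  set c0 : ℝ := rinn v x0 - p0 with hc0def
  obtain ⟨R, hR⟩ := hsc (‖v‖ + 1)
  have hout : ∀ y : Euc d, R ≤ ‖y‖ →
      ((rinn v y : ℝ) : EReal) - φ y ≤ ((-‖y‖ : ℝ) : EReal) :=
    fun y hy => val_le_of_norm_ge le_rfl hR hy
  have hc0 : ((c0 : ℝ) : EReal) ≤ econj φ v := by
    have := le_iSup (fun w => ((rinn v w : ℝ) : EReal) - φ w) x0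
    rw [← hp0, ← EReal.coe_sub] at this
    rw [econj]
    exact this
  rcases eq_or_ne (econj φ v) ⊤ with hS | hS
  · -- S = ⊤ : derive a contradiction
    exfalso
    have hex : ∀ k : ℕ, ∃ w : Euc d,
        ((max (k : ℝ) c0 : ℝ) : EReal) < ((rinn v w : ℝ) : EReal) - φ w := by
      intro k
      have h := hS ▸ EReal.coe_lt_top (max (k : ℝ) c0)
      rw [econj, lt_iSup_iff] at h
      exact h
    choose wk hwk using hex
    have hbound : ∀ k, ‖wk k‖ ≤ max R |c0| := by
      intro k
      rcases le_or_gt R ‖wk k‖ with h | h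
      · have h1 := (hwk k).trans_le (hout (wk k) h)
        rw [EReal.coe_lt_coe_iff] at h1
        have : (c0 : ℝ) ≤ max (k : ℝ) c0 := le_max_right _ _
        have : ‖wk k‖ ≤ -c0 := by linarith
        exact le_max_of_le_right (this.trans (neg_le_abs c0))
      · exact le_max_of_le_left h.le
    obtain ⟨yhat, -, σ, hσ, htend⟩ := tendsto_subseq_of_bounded
      (Metric.isBounded_closedBall (x := (0 : Euc d)) (r := max R |c0|))
      (fun k => mem_closedBall_zero_iff.mpr (hbound k))
    have hval : ∀ m : ℕ, (((m : ℝ) : ℝ) : EReal) ≤ ((rinn v yhat : ℝ) : EReal) - φ yhat := by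
      intro m
      refine core_lsc hlsc (vk := fun _ => v) (yk := fun k => wk (σ (k + m)))
        (ck := fun _ => (m : ℝ)) tendsto_const_nhds ?_ tendsto_const_nhds ?_
      · exact (htend.comp (tendsto_add_atTop_nat m))
      · intro k
        refine le_of_lt ?_
        refine lt_of_le_of_lt ?_ (hwk (σ (k + m)))
        rw [EReal.coe_le_coe_iff]
        refine le_trans (show ((m:ℝ):ℝ) ≤ ((σ (k+m) : ℕ):ℝ) from ?_) (le_max_left _ _)
        exact_mod_cast le_trans (Nat.le_add_left m k) (hσ.le_apply)
    rcases eq_or_ne (φ yhat) ⊤ with hyt | hyt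
    · have := hval 0
      rw [hyt, EReal.sub_top] at this
      simpa using this
    · have hyb : φ yhat ≠ ⊥ := hp.2 yhat
      lift φ yhat to ℝ using ⟨hyt, hyb⟩ with s hs
      obtain ⟨m, hm⟩ := exists_nat_gt (rinn v yhat - s)
      have := hval m
      rw [← EReal.coe_sub, EReal.coe_le_coe_iff] at this
      linarith
  · -- S is finite
    have hSbot : econj φ v ≠ ⊥ := fun h => by
      rw [h] at hc0; exact (EReal.coe_ne_bot c0) (le_bot_iff.mp hc0)
    obtain ⟨s, hs⟩ : ∃ s : ℝ, econj φ v = (s : EReal) :=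
      ⟨(econj φ v).toReal, (EReal.coe_toReal hS hSbot).symm⟩
    have hex : ∀ k : ℕ, ∃ w : Euc d,
        ((s - 1/(k+1) : ℝ) : EReal) < ((rinn v w : ℝ) : EReal) - φ w := by
      intro k
      have h1 : (s - 1/(k+1) : ℝ) < s := by
        have : (0:ℝ) < 1/(k+1) := by positivity
        linarith
      have h : ((s - 1/(k+1) : ℝ) : EReal) < econj φ v := by
        rw [hs]; exact_mod_cast h1
      rw [econj, lt_iSup_iff] at h
      exact h
    choose wk hwk using hex
    have hlow : ∀ k : ℕ, ((s - 1 : ℝ) : EReal) < ((rinn v (wk k) : ℝ) : EReal) - φ (wk k) := by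
      intro k
      refine lt_of_le_of_lt ?_ (hwk k)
      rw [EReal.coe_le_coe_iff]
      have h1 : 1/((k:ℝ)+1) ≤ 1 := by
        rw [div_le_one (by positivity)]
        simp
      linarith
    have hbound : ∀ k, ‖wk k‖ ≤ max R |1 - s| := by
      intro k
      rcases le_or_gt R ‖wk k‖ with h | h
      · have h1 := (hlow k).trans_le (hout (wk k) h)
        rw [EReal.coe_lt_coe_iff] at h1
        have : ‖wk k‖ ≤ 1 - s := by linarith
        exact le_max_of_le_right (this.trans (le_abs_self _))
      · exact le_max_of_le_left h.le
    obtain ⟨yhat, -, σ, hσ, htend⟩ := tendsto_subseq_of_bounded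
      (Metric.isBounded_closedBall (x := (0 : Euc d)) (r := max R |1 - s|))
      (fun k => mem_closedBall_zero_iff.mpr (hbound k))
    have hcktend : Tendsto (fun k : ℕ => s - 1/((σ k : ℝ)+1)) atTop (𝓝 (s - 0)) := by
      refine tendsto_const_nhds.sub ?_
      have h0 : Tendsto (fun n : ℕ => 1/((n:ℝ)+1)) atTop (𝓝 0) :=
        tendsto_one_div_add_atTop_nhds_zero_nat
      exact h0.comp hσ.tendsto_atTop
    rw [sub_zero] at hcktend
    have hval : ((s : ℝ) : EReal) ≤ ((rinn v yhat : ℝ) : EReal) - φ yhat := by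
      refine core_lsc hlsc (vk := fun _ => v) (yk := fun k => wk (σ k))
        (ck := fun k => s - 1/((σ k : ℝ)+1)) tendsto_const_nhds htend hcktend ?_
      intro k
      exact (hwk (σ k)).le
    have hup : ((rinn v yhat : ℝ) : EReal) - φ yhat ≤ ((s : ℝ) : EReal) := by
      rw [← hs, econj]
      exact le_iSup (fun w => ((rinn v w : ℝ) : EReal) - φ w) yhat
    have heq := le_antisymm hup hval
    rcases eq_or_ne (φ yhat) ⊤ with hyt | hyt
    · rw [hyt, EReal.sub_top] at heq; exact absurd heq (by simp)
    have hyb : φ yhat ≠ ⊥ := hp.2 yhat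
    lift φ yhat to ℝ using ⟨hyt, hyb⟩ with ry hry
    rw [← EReal.coe_sub, EReal.coe_eq_coe_iff] at heq
    refine ⟨yhat, ry, hry.symm, fun w => ?_⟩
    have : rinn v yhat - ry = s := heq
    rw [this, ← hs, econj]
    exact le_iSup (fun w => ((rinn v w : ℝ) : EReal) - φ w) w

end Aux4
section Aux5

variable {d : ℕ}

lemma rinn_sub_left (a b c : Euc d) : rinn (a - b) c = rinn a c - rinn b c := by
  simp [rinn_eq, inner_sub_left]

lemma rinn_comm (a b : Euc d) : rinn a b = rinn b a := real_inner_comm b a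

/-- Continuity of maximizers at a point where the maximizer is unique. -/
lemma maxAt_continuity {φ : Euc d → EReal} {C : Set (Euc d)} (hφ : PhiAssump φ C)
    {u' ystar : Euc d} {rstar : ℝ} (h : MaxAt φ u' ystar rstar) :
    ∀ ε > (0:ℝ), ∃ δ > (0:ℝ), ∀ v y r, dist v u' < δ → MaxAt φ v y r →
      ‖y - ystar‖ ≤ ε := by
  by_contra hcon
  push_neg at hcon
  obtain ⟨ε, hε, hδ⟩ := hcon
  have hex : ∀ k : ℕ, ∃ v y r, dist v u' < 1/(k+1) ∧ MaxAt φ v y r ∧ ε < ‖y - ystar‖ := by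
    intro k
    obtain ⟨v, y, r, h1, h2, h3⟩ := hδ (1/(k+1)) (by positivity)
    exact ⟨v, y, r, h1, h2, h3⟩
  choose vk yk rk h1 h2 h3 using hex
  have hv : Tendsto vk atTop (𝓝 u') := by
    rw [tendsto_iff_dist_tendsto_zero]
    exact squeeze_zero (fun k => dist_nonneg) (fun k => (h1 k).le)
      tendsto_one_div_add_atTop_nhds_zero_nat
  have hnv : ∀ k, ‖vk k‖ ≤ ‖u'‖ + 1 := by
    intro k
    have hd : dist (vk k) u' < 1 := by
      refine (h1 k).trans_le ?_
      rw [div_le_one (by positivity)]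
      simp
    have := norm_sub_norm_le (vk k) u'
    rw [← dist_eq_norm] at this
    linarith
  set c1 : ℝ := -((‖u'‖ + 1) * ‖ystar‖) - rstar with hc1
  have hlow : ∀ k, (c1 : EReal) ≤ ((rinn (vk k) (yk k) - rk k : ℝ) : EReal) := by
    intro k
    have hb := (h2 k).2 ystar
    rw [h.1, ← EReal.coe_sub] at hb
    refine le_trans ?_ hb
    rw [EReal.coe_le_coe_iff]
    have := abs_real_inner_le_norm (vk k) ystar
    have h5 : ‖vk k‖ * ‖ystar‖ ≤ (‖u'‖ + 1) * ‖ystar‖ :=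
      mul_le_mul_of_nonneg_right (hnv k) (norm_nonneg _)
    have h6 : rinn (vk k) ystar = inner ℝ (vk k) ystar := rfl
    rw [← h6] at this
    have h7 := abs_le.mp this
    simp only [hc1]
    linarith [h7.1]
  obtain ⟨R, hR⟩ := hφ.coercive (‖u'‖ + 2)
  have hbound : ∀ k, ‖yk k‖ ≤ max R |c1| := by
    intro k
    rcases le_or_gt R ‖yk k‖ with hR' | hR'
    · have hval : ((rinn (vk k) (yk k) : ℝ) : EReal) - φ (yk k) ≤ ((-‖yk k‖ : ℝ) : EReal) :=
        val_le_of_norm_ge (by linarith [hnv k]) hR hR'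
      rw [(h2 k).1, ← EReal.coe_sub] at hval
      have := (hlow k).trans hval
      rw [EReal.coe_le_coe_iff] at this
      refine le_max_of_le_right ?_
      have : ‖yk k‖ ≤ -c1 := by linarith
      exact this.trans (neg_le_abs c1)
    · exact le_max_of_le_left hR'.le
  obtain ⟨yhat, -, σ, hσ, htend⟩ := tendsto_subseq_of_bounded
    (Metric.isBounded_closedBall (x := (0 : Euc d)) (r := max R |c1|))
    (fun k => mem_closedBall_zero_iff.mpr (hbound k))
  have hεy : ε ≤ ‖yhat - ystar‖ := by
    have hn : Tendsto (fun k => ‖yk (σ k) - ystar‖) atTop (𝓝 ‖yhat - ystar‖) :=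
      ((htend.sub tendsto_const_nhds).norm)
    exact ge_of_tendsto hn (Eventually.of_forall (fun k => (h3 (σ k)).le))
  have hcore : ((rinn u' ystar - rstar : ℝ) : EReal)
      ≤ ((rinn u' yhat : ℝ) : EReal) - φ yhat := by
    refine core_lsc hφ.lsc (vk := fun k => vk (σ k)) (yk := fun k => yk (σ k))
      (ck := fun k => rinn (vk (σ k)) ystar - rstar)
      (hv.comp hσ.tendsto_atTop) htend ?_ ?_
    · exact ((hv.comp hσ.tendsto_atTop).inner tendsto_const_nhds).sub tendsto_const_nhds
    · intro k
      have hb := (h2 (σ k)).2 ystar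
      rw [h.1, ← EReal.coe_sub] at hb
      rw [(h2 (σ k)).1, ← EReal.coe_sub]
      exact hb
  have hup := h.2 yhat
  have heq := le_antisymm hup hcore
  have hytop : φ yhat ≠ ⊤ := by
    intro hyt
    rw [hyt, EReal.sub_top] at heq
    exact (EReal.coe_ne_bot _) heq.symm
  have hybot : φ yhat ≠ ⊥ := hφ.proper.2 yhat
  lift φ yhat to ℝ using ⟨hytop, hybot⟩ with rh hrh
  rw [← EReal.coe_sub, EReal.coe_eq_coe_iff] at heq
  have hmax : MaxAt φ u' yhat rh := by
    refine ⟨hrh.symm, fun w => ?_⟩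
    have : rinn u' yhat - rh = rinn u' ystar - rstar := heq
    rw [this]
    exact h.2 w
  have := maxAt_unique hφ hmax h
  rw [this] at hεy
  simp at hεy
  linarith

/-- The conjugate is differentiable at a point with a (unique) maximizer. -/
lemma hasGradientAt_rconj {φ : Euc d → EReal} {C : Set (Euc d)} (hφ : PhiAssump φ C)
    {u' ystar : Euc d} {rstar : ℝ} (h : MaxAt φ u' ystar rstar) :
    HasGradientAt (rconj φ) ystar u' := by
  rw [hasGradientAt_iff_isLittleO, Asymptotics.isLittleO_iff]
  intro c hc
  obtain ⟨δ, hδ, hcont⟩ := maxAt_continuity hφ h c hc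
  rw [Metric.eventually_nhds_iff]
  refine ⟨δ, hδ, fun v hv => ?_⟩
  obtain ⟨Yv, Rv, hYv⟩ := exists_maxAt hφ.proper hφ.lsc hφ.coercive v
  have hY : ‖Yv - ystar‖ ≤ c := hcont v Yv Rv hv hYv
  have e1 : rconj φ u' = rinn u' ystar - rstar := rconj_eq_of_maxAt h
  have e2 : rconj φ v = rinn v Yv - Rv := rconj_eq_of_maxAt hYv
  have low : rinn v ystar - rstar ≤ rconj φ v := fy_of_maxAt hYv h.1
  have upp : rinn u' Yv - Rv ≤ rconj φ u' := fy_of_maxAt h hYv.1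
  set q : ℝ := rconj φ v - rconj φ u' - inner ℝ ystar (v - u') with hq
  have hinner : (inner ℝ ystar (v - u') : ℝ) = rinn v ystar - rinn u' ystar := by
    rw [real_inner_comm]
    rw [show (inner ℝ (v - u') ystar : ℝ) = rinn (v - u') ystar from rfl]
    rw [rinn_sub_left]
  have hq0 : 0 ≤ q := by
    simp only [hq, hinner, e1]
    linarith
  have hqup : q ≤ rinn (v - u') (Yv - ystar) := by
    have expand : rinn (v - u') (Yv - ystar)
        = rinn v Yv - rinn u' Yv - (rinn v ystar - rinn u' ystar) := by
      rw [rinn_sub_left, rinn_sub_right, rinn_sub_right]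
      ring
    simp only [hq, hinner, e1, e2, expand]
    linarith
  have hcs : rinn (v - u') (Yv - ystar) ≤ ‖v - u'‖ * ‖Yv - ystar‖ :=
    real_inner_le_norm _ _
  have habs : |q| ≤ c * ‖v - u'‖ := by
    rw [abs_le]
    constructor
    · linarith [mul_nonneg hc.le (norm_nonneg (v - u'))]
    · have : ‖v - u'‖ * ‖Yv - ystar‖ ≤ ‖v - u'‖ * c :=
        mul_le_mul_of_nonneg_left hY (norm_nonneg _)
      calc q ≤ ‖v - u'‖ * ‖Yv - ystar‖ := hqup.trans hcs
        _ ≤ ‖v - u'‖ * c := this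
        _ = c * ‖v - u'‖ := mul_comm _ _
  calc ‖rconj φ v - rconj φ u' - inner ℝ ystar (v - u')‖ = |q| := rfl
    _ ≤ c * ‖v - u'‖ := habs

end Aux5
/-- stability of the NBK step in Bregman distance. -/
theorem statement4 {d n : ℕ} (φ : Euc d → EReal) (C Dset : Set (Euc d))
    (f : Fin n → Euc d → ℝ) (f' : Fin n → Euc d → Euc d)
    (hφ : PhiAssump φ C) (hf : FAssump f f' Dset C) (hS : (solSet f C).Nonempty)
    (hA2 : Assump2 φ f f')
    (x u : Euc d) (hu : u ∈ subdiff φ x)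
    (i : Fin n) (hf0 : f i x ≠ 0) (hf'0 : f' i x ≠ 0)
    (t : ℝ) (ht : ∀ s : ℝ, lineObj φ f f' i x u t ≤ lineObj φ f f' i x u s)
    (u' x' : Euc d) (hu' : u' = u - t • f' i x) (hx' : x' = gradconj φ u') :
    ∀ z ∈ solSet f C, breg φ u' x' z ≤ breg φ u x z - breg φ u x x' := by
  intro z hz
  set a : Euc d := f' i x with ha
  -- x is a maximizer for u
  obtain ⟨px, hxmax⟩ := maxAt_of_mem_subdiff hφ.proper hu
  have hpx : φ x = (px : EReal) := hxmax.1
  -- maximizer at u'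
  obtain ⟨ys, rs, hys⟩ := exists_maxAt hφ.proper hφ.lsc hφ.coercive u'
  have hgrad : HasGradientAt (rconj φ) ys u' := hasGradientAt_rconj hφ hys
  have hx'eq : x' = ys := by rw [hx', gradconj]; exact hgrad.gradient
  rw [hx'eq]
  have hrs : φ ys = (rs : EReal) := hys.1
  -- x ∈ Dset
  have hxD : x ∈ Dset := by
    refine hf.CsubD ?_
    rw [← hφ.domC]
    exact subset_closure ⟨u, hu⟩
  -- inner product expansions
  have hsmul : ∀ w : Euc d, rinn (t • a) w = t * rinn a w := fun w =>
    real_inner_smul_left a w t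
  have hinnu' : ∀ w : Euc d, rinn u' w = rinn u w - t * rinn a w := by
    intro w
    rw [hu', rinn_sub_left, hsmul]
  -- stationarity : rinn a ys = rinn a x - f i x
  have hlin : HasDerivAt (fun s : ℝ => u - s • a) (-a) t := by
    have h1 : HasDerivAt (fun s : ℝ => s • a) ((1:ℝ) • a) t := (hasDerivAt_id t).smul_const a
    have h2 := (hasDerivAt_const t u).sub h1
    simpa [Pi.sub_def] using h2
  have hcomp : HasDerivAt (fun s : ℝ => rconj φ (u - s • a))
      ((InnerProductSpace.toDual ℝ (Euc d) ys) (-a)) t := by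
    have hF : HasFDerivAt (rconj φ) (InnerProductSpace.toDual ℝ (Euc d) ys) (u - t • a) := by
      rw [← hu']; exact hgrad.hasFDerivAt
    have hcomp := HasFDerivAt.comp_hasDerivAt (f := fun s : ℝ => u - s • a) t hF hlin
    simpa [Function.comp_def] using hcomp
  have hmul : HasDerivAt (fun s : ℝ => s * (rinn a x - f i x)) (rinn a x - f i x) t :=
    hasDerivAt_mul_const _
  have hG : HasDerivAt (fun s : ℝ => lineObj φ f f' i x u s)
      ((InnerProductSpace.toDual ℝ (Euc d) ys) (-a) + (rinn a x - f i x)) t := by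
    have := hcomp.add hmul
    exact this
  have hmin : IsLocalMin (fun s : ℝ => lineObj φ f f' i x u s) t :=
    Filter.Eventually.of_forall ht
  have hzero := hmin.hasDerivAt_eq_zero hG
  have hstat : rinn a ys = rinn a x - f i x := by
    rw [InnerProductSpace.toDual_apply_apply, inner_neg_right] at hzero
    have h3 : (inner ℝ ys a : ℝ) = rinn a ys := (real_inner_comm ys a).symm
    linarith [h3 ▸ hzero]
  -- sign : 0 ≤ t * f i x
  have htf : 0 ≤ t * f i x := by
    have h0 := ht 0
    have hl0 : lineObj φ f f' i x u 0 = rconj φ u := by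
      simp [lineObj]
    have hlt : lineObj φ f f' i x u t = rconj φ u' + t * (rinn a x - f i x) := by
      rw [lineObj, ← hu']
    have hconju : rconj φ u = rinn u x - px := rconj_eq_of_maxAt hxmax
    have hfy : rinn u' x - px ≤ rconj φ u' := fy_of_maxAt hys hpx
    have h4 := hinnu' x
    rw [hl0, hlt, hconju] at h0
    linarith
  -- key : t * (f i x + rinn a (z - x)) ≤ 0
  have hkey : t * (f i x + rinn a (z - x)) ≤ 0 := by
    rcases hA2 i with ⟨hnn, hstar, -⟩ | ⟨hnn, hsstar⟩ | haff
    · have hminz : ∀ y, f i z ≤ f i y := by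
        intro y; rw [hz.2 i]; exact hnn y
      have hsc := hstar.2 x z hminz
      rw [hz.2 i] at hsc
      have hfx : 0 < f i x := lt_of_le_of_ne (hnn x) (Ne.symm hf0)
      have htpos : 0 ≤ t := by nlinarith
      nlinarith
    · rcases eq_or_ne x z with hxz | hxz
      · exact absurd (hxz ▸ hz.2 i) hf0
      · have hminz : ∀ y, f i z ≤ f i y := by
          intro y; rw [hz.2 i]; exact hnn y
        have hsc := (hsstar.2 x z hminz hxz).le
        rw [hz.2 i] at hsc
        have hfx : 0 < f i x := lt_of_le_of_ne (hnn x) (Ne.symm hf0)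
        have htpos : 0 ≤ t := by nlinarith
        nlinarith
    · obtain ⟨cc, b, hcb⟩ := haff
      have hgx : HasGradientAt (f i) a x := hf.grad i x hxD
      have hgc : HasGradientAt (f i) cc x := by
        have h1 : HasFDerivAt (fun w : Euc d => (inner ℝ cc w : ℝ) + b)
            (InnerProductSpace.toDual ℝ (Euc d) cc) x := by
          have := (InnerProductSpace.toDual ℝ (Euc d) cc).hasFDerivAt (x := x)
          simpa [InnerProductSpace.toDual_apply_apply] using this.add_const b
        have h2 : (f i) = fun w : Euc d => (inner ℝ cc w : ℝ) + b := funext hcb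
        rw [hasGradientAt_iff_hasFDerivAt, h2]
        exact h1
      have hac : a = cc := hgx.unique hgc
      have hzero' : f i x + rinn a (z - x) = 0 := by
        rw [hac, hcb x, ← hz.2 i, hcb z, rinn_sub_right]
        simp only [rinn_eq]
        ring
      rw [hzero', mul_zero]
  -- final assembly
  have hfinkey : t * rinn a (z - ys) ≤ 0 := by
    have hexp : rinn a (z - ys) = f i x + rinn a (z - x) := by
      rw [rinn_sub_right, rinn_sub_right, hstat]; ring
    rw [hexp]; exact hkey
  have hbregxys : breg φ u x ys = ((rs - px - rinn u (ys - x) : ℝ) : EReal) := by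
    rw [breg, hrs, hpx, ← EReal.coe_sub, ← EReal.coe_sub]
  rcases eq_or_ne (φ z) ⊤ with hzt | hzt
  · have hR : breg φ u x z - breg φ u x ys = ⊤ := by
      rw [breg, hzt, hpx, hbregxys, EReal.top_sub_coe, EReal.top_sub_coe, EReal.top_sub_coe]
    rw [hR]
    exact le_top
  · have hzb : φ z ≠ ⊥ := hφ.proper.2 z
    lift φ z to ℝ using ⟨hzt, hzb⟩ with pz hpz
    have hL : breg φ u' ys z = ((pz - rs - rinn u' (z - ys) : ℝ) : EReal) := by
      rw [breg, ← hpz, hrs, ← EReal.coe_sub, ← EReal.coe_sub]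
    have hR1 : breg φ u x z = ((pz - px - rinn u (z - x) : ℝ) : EReal) := by
      rw [breg, ← hpz, hpx, ← EReal.coe_sub, ← EReal.coe_sub]
    rw [hL, hR1, hbregxys, ← EReal.coe_sub, EReal.coe_le_coe_iff]
    have e1 := hinnu' (z - ys)
    have e2 : rinn u (z - ys) = rinn u z - rinn u ys := rinn_sub_right u z ys
    have e3 : rinn u (z - x) = rinn u z - rinn u x := rinn_sub_right u z x
    have e4 : rinn u (ys - x) = rinn u ys - rinn u x := rinn_sub_right u ys x
    linarith [hfinkey]
end
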